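/- arXiv:1201.1440 — 5 statements merged into one kernel-verified Lean document; each statement's English description precedes it below -/
import Mathlib

section
/- Let d ≥ 2, 0 < ε ≤ M, and x ∈ ℝ^d. Then ε · ∫_{ε ≤ |x−y| ≤ M} ln(|x−y|/ε + 2) / |x−y|^{d+1} dy ≤ C(d) · ln(M/ε + 2), where C(d) depends only on d. -/
open MeasureTheory Metric Bornology Set
open scoped ENNReal NNReal

noncomputable section

abbrev E (d : ℕ) := EuclideanSpace ℝ (Fin d)

/-- For d ≥ 2 and 0 < ε ≤ M,
ε · ∫_{ε ≤ |x−y| ≤ M} ln(|x−y|/ε + 2)/|x−y|^{d+1} dy ≤ C(d)·ln(M/ε + 2). -/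
theorem stmt_3 (d : ℕ) (hd : 2 ≤ d) :
    ∃ C : ℝ, 0 < C ∧ ∀ (x : E d) (ε M : ℝ), 0 < ε → ε ≤ M →
      ε * (∫ y in {y : E d | ε ≤ dist x y ∧ dist x y ≤ M},
            Real.log (dist x y / ε + 2) / (dist x y) ^ ((d : ℝ) + 1))
        ≤ C * Real.log (M / ε + 2) := by
  haveI : NeZero d := ⟨by omega⟩
  haveI : Nontrivial (E d) := inferInstance
  set v : ℝ := (volume (ball (0 : E d) 1)).toReal with hv
  have hv0 : 0 ≤ v := ENNReal.toReal_nonneg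
  refine ⟨d * v + 1, by positivity, fun x ε M hε hεM => ?_⟩
  have hM : 0 < M := lt_of_lt_of_le hε hεM
  set L := Real.log (M / ε + 2) with hL
  have hL0 : 0 ≤ L := Real.log_nonneg (by nlinarith [div_nonneg hM.le hε.le])
  set h : ℝ → ℝ := fun r => Real.log (r / ε + 2) / r ^ ((d : ℝ) + 1) with hh
  set g : ℝ → ℝ := (Icc ε M).indicator h with hg
  have hmeas : MeasurableSet {y : E d | ε ≤ dist x y ∧ dist x y ≤ M} := by
    have : {y : E d | ε ≤ dist x y ∧ dist x y ≤ M} =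
        (fun y => dist x y) ⁻¹' (Icc ε M) := rfl
    rw [this]
    exact (isClosed_Icc.preimage (continuous_const.dist continuous_id)).measurableSet
  have key : (∫ y in {y : E d | ε ≤ dist x y ∧ dist x y ≤ M}, h (dist x y))
      = ∫ y : E d, g (‖x - y‖) := by
    rw [← integral_indicator hmeas]
    congr 1
  have key2 : (∫ y : E d, g (‖x - y‖)) = ∫ y : E d, g (‖y‖) :=
    integral_sub_left_eq_self (fun y => g ‖y‖) volume x
  have polar := MeasureTheory.integral_fun_norm_addHaar (volume : Measure (E d)) g
  rw [finrank_euclideanSpace_fin] at polar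
  -- rewrite the radial integral
  set J := ∫ r in Ioi (0:ℝ), r ^ (d - 1) • g r with hJ
  have hIccIoi : Icc ε M ⊆ Ioi (0:ℝ) := fun r hr => lt_of_lt_of_le hε hr.1
  have hJeq : J = ∫ r in Icc ε M, r ^ (d - 1) * h r := by
    rw [hJ]
    have : ∀ r : ℝ, r ^ (d - 1) • g r
        = (Icc ε M).indicator (fun r => r ^ (d - 1) * h r) r := by
      intro r
      simp only [hg, indicator_apply, smul_eq_mul]
      split <;> simp
    simp_rw [this]
    rw [setIntegral_indicator measurableSet_Icc, inter_eq_right.mpr hIccIoi]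
  -- bound the radial integral
  have hbound : J ≤ L * (ε⁻¹ - M⁻¹) := by
    have hInt : IntegrableOn (fun r : ℝ => L * (r:ℝ) ^ (-2 : ℤ)) (Icc ε M) := by
      apply ContinuousOn.integrableOn_Icc
      intro r hr
      have : r ≠ 0 := ne_of_gt (hIccIoi hr)
      exact (continuousOn_const.mul ((continuousOn_id.zpow₀ (-2)
        (fun y hy => Or.inl (ne_of_gt (hIccIoi hy)))))) r hr
    have hle : ∀ r ∈ Icc ε M, r ^ (d - 1) * h r ≤ L * (r:ℝ) ^ (-2 : ℤ) := by
      intro r hr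
      have hr0 : 0 < r := hIccIoi hr
      have hrpow : r ^ ((d : ℝ) + 1) = r ^ (d + 1) := by
        rw [show ((d : ℝ) + 1) = ((d + 1 : ℕ) : ℝ) by push_cast; ring,
          Real.rpow_natCast]
      have hlog : Real.log (r / ε + 2) ≤ L := by
        apply Real.log_le_log (by positivity)
        have := hr.2
        gcongr
      calc r ^ (d - 1) * h r = r ^ (d - 1) * (Real.log (r / ε + 2) / r ^ (d + 1)) := by
            rw [hh]; simp only; rw [hrpow]
        _ ≤ r ^ (d - 1) * (L / r ^ (d + 1)) := by
            apply mul_le_mul_of_nonneg_left _ (by positivity)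
            apply div_le_div_of_nonneg_right hlog (by positivity) |>.trans_eq rfl
        _ = L * (r:ℝ) ^ (-2 : ℤ) := by
            rw [zpow_neg, show ((2:ℤ) = (2:ℕ)) from rfl, zpow_natCast]
            have : r ^ (d + 1) = r ^ (d - 1) * r ^ 2 := by
              rw [← pow_add]; congr 1; omega
            rw [this]
            field_simp
    rw [hJeq]
    have step : (∫ r in Icc ε M, r ^ (d - 1) * h r)
        ≤ ∫ r in Icc ε M, L * (r:ℝ) ^ (-2 : ℤ) := by
      apply integral_mono_of_nonneg
      · filter_upwards [ae_restrict_mem measurableSet_Icc] with r hr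
        have hr0 : 0 < r := hIccIoi hr
        have : 0 ≤ h r := by
          rw [hh]
          apply div_nonneg (Real.log_nonneg (by nlinarith [div_nonneg hr0.le hε.le]))
          positivity
        positivity
      · exact hInt
      · filter_upwards [ae_restrict_mem measurableSet_Icc] with r hr
        exact hle r hr
    refine step.trans_eq ?_
    rw [MeasureTheory.integral_Icc_eq_integral_Ioc,
      ← intervalIntegral.integral_of_le hεM, intervalIntegral.integral_const_mul,
      integral_zpow]
    · norm_num
      left; ring
    · right
      constructor
      · norm_num
      · rw [Set.uIcc_of_le hεM]
        intro hmem
        exact absurd hmem.1 (not_le.mpr hε)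
  -- assemble
  have hεinv : L * (ε⁻¹ - M⁻¹) ≤ L / ε := by
    have : ε⁻¹ - M⁻¹ ≤ ε⁻¹ := by
      have : 0 ≤ M⁻¹ := by positivity
      linarith
    calc L * (ε⁻¹ - M⁻¹) ≤ L * ε⁻¹ := mul_le_mul_of_nonneg_left this hL0
      _ = L / ε := by rw [div_eq_mul_inv]
  have hcalc : ε * (∫ y in {y : E d | ε ≤ dist x y ∧ dist x y ≤ M}, h (dist x y))
      = ε * (d * (v * J)) := by
    rw [key, key2, polar, nsmul_eq_mul, smul_eq_mul]; rfl
  calc ε * (∫ y in {y : E d | ε ≤ dist x y ∧ dist x y ≤ M},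
        Real.log (dist x y / ε + 2) / (dist x y) ^ ((d : ℝ) + 1))
      = ε * (d * (v * J)) := hcalc
    _ ≤ ε * (d * (v * (L / ε))) := by
        have hJle : J ≤ L / ε := hbound.trans hεinv
        gcongr
    _ = (d * v) * L := by field_simp
    _ ≤ (d * v + 1) * L := by nlinarith
end
end

section
/- Let Ω ⊂ ℝ^d (d ≥ 2) be a bounded measurable set of diameter at most M, and let 0 < ε ≤ M. Define the kernel K_ε(x,y) = ε·|x−y|^{−d}·ln(|x−y|/ε + 2) if |x−y| ≥ ε, and K_ε(x,y) = |x−y|^{1−d} if 0 < |x−y| < ε. Then sup_{x∈Ω} ∫_Ω K_ε(x,y) dy ≤ C(d) · ε · (ln(M/ε + 2))², where C(d) depends only on d. -/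
open MeasureTheory Metric Bornology Set
open scoped ENNReal NNReal

noncomputable section

/-- Polar coordinates for lower integrals of radial functions. -/
lemma lintegral_fun_norm_addHaar' {V : Type*} [NormedAddCommGroup V] [NormedSpace ℝ V]
    [MeasurableSpace V] [BorelSpace V] [FiniteDimensional ℝ V] [Nontrivial V]
    (μ : Measure V) [μ.IsAddHaarMeasure] {G : ℝ → ℝ≥0∞} (hG : Measurable G) :
    ∫⁻ x, G ‖x‖ ∂μ
      = μ.toSphere univ *
        ∫⁻ r in Ioi (0 : ℝ), ENNReal.ofReal (r ^ (Module.finrank ℝ V - 1)) * G r := by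
  have hGv : Measurable fun r : Ioi (0 : ℝ) => G r := hG.comp measurable_subtype_coe
  calc
    ∫⁻ x, G ‖x‖ ∂μ = ∫⁻ x, G ‖x‖ ∂(μ.restrict ({0}ᶜ : Set V)) := by
      rw [MeasureTheory.restrict_compl_singleton]
    _ = ∫⁻ x : ({0}ᶜ : Set V), G ‖(x : V)‖ ∂(μ.comap Subtype.val) :=
      (lintegral_subtype_comap (measurableSet_singleton _).compl _).symm
    _ = ∫⁻ z : sphere (0 : V) 1 × Ioi (0 : ℝ), G z.2
          ∂(μ.toSphere.prod (.volumeIoiPow (Module.finrank ℝ V - 1))) := by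
      rw [← μ.measurePreserving_homeomorphUnitSphereProd.lintegral_comp_emb
        (Homeomorph.measurableEmbedding _) (fun z => G z.2)]
      simp
    _ = μ.toSphere univ * ∫⁻ r : Ioi (0 : ℝ), G r
          ∂(Measure.volumeIoiPow (Module.finrank ℝ V - 1)) := by
      rw [← lintegral_map hGv measurable_snd, Measure.map_snd_prod, lintegral_smul_measure, smul_eq_mul]
    _ = μ.toSphere univ * ∫⁻ r : Ioi (0 : ℝ),
          ENNReal.ofReal ((r : ℝ) ^ (Module.finrank ℝ V - 1)) * G r
          ∂(Measure.comap Subtype.val volume) := by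
      rw [Measure.volumeIoiPow, lintegral_withDensity_eq_lintegral_mul _
        ((measurable_subtype_coe.pow_const _).ennreal_ofReal) hGv]
      rfl
    _ = _ := by
      rw [lintegral_subtype_comap measurableSet_Ioi
        (fun r : ℝ => ENNReal.ofReal (r ^ (Module.finrank ℝ V - 1)) * G r)]

/-- The one-dimensional radial estimate. -/
lemma radial_bound (d : ℕ) (hd : 2 ≤ d) {ε M L : ℝ} (hε : 0 < ε) (hεM : ε ≤ M)
    (hL : 1 ≤ L) (hlog : Real.log (M / ε) ≤ L) :
    ∫⁻ r in Ioi (0 : ℝ), ENNReal.ofReal (r ^ (d - 1)) *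
      (if r < ε then ENNReal.ofReal (r ^ (1 - (d : ℝ)))
       else if r ≤ M then ENNReal.ofReal (ε * L * r ^ (-(d : ℝ))) else 0)
      ≤ ENNReal.ofReal (2 * (ε * L ^ 2)) := by
  have hM : 0 < M := hε.trans_le hεM
  have hcast : ((d - 1 : ℕ) : ℝ) = (d : ℝ) - 1 := by
    push_cast [Nat.cast_sub (by omega : 1 ≤ d)]; ring
  set F : ℝ → ℝ≥0∞ := fun r => ENNReal.ofReal (r ^ (d - 1)) *
      (if r < ε then ENNReal.ofReal (r ^ (1 - (d : ℝ)))
       else if r ≤ M then ENNReal.ofReal (ε * L * r ^ (-(d : ℝ))) else 0) with hF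
  have hsplit : ∫⁻ r in Ioi (0 : ℝ), F r
      = (∫⁻ r in Ioc (0 : ℝ) ε, F r) + ∫⁻ r in Ioi ε, F r := by
    rw [← lintegral_union measurableSet_Ioi (Ioc_disjoint_Ioi le_rfl),
      Ioc_union_Ioi_eq_Ioi hε.le]
  have h1 : (∫⁻ r in Ioc (0 : ℝ) ε, F r) = ENNReal.ofReal ε := by
    rw [← setLIntegral_congr (Ioo_ae_eq_Ioc (μ := volume) (a := (0:ℝ)) (b := ε))]
    have : ∀ r ∈ Ioo (0 : ℝ) ε, F r = 1 := by
      intro r hr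
      have hr0 : (0 : ℝ) < r := hr.1
      rw [hF]
      simp only [if_pos hr.2]
      rw [← ENNReal.ofReal_mul (by positivity), ← Real.rpow_natCast r (d - 1), hcast,
        ← Real.rpow_add hr0,
        show (d : ℝ) - 1 + (1 - (d : ℝ)) = 0 by ring, Real.rpow_zero, ENNReal.ofReal_one]
    rw [setLIntegral_congr_fun measurableSet_Ioo this]
    simp [Real.volume_Ioo]
  have h2 : (∫⁻ r in Ioi ε, F r) ≤ ENNReal.ofReal (ε * L * L) := by
    have hind : ∀ r ∈ Ioi ε, F r
        = (Ioc ε M).indicator (fun r => ENNReal.ofReal (ε * L * r⁻¹)) r := by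
      intro r hr
      have hrε : ε < r := hr
      have hr0 : (0 : ℝ) < r := hε.trans hrε
      rw [hF]
      simp only [if_neg (not_lt.2 hrε.le)]
      by_cases hrM : r ≤ M
      · rw [if_pos hrM, indicator_of_mem (show r ∈ Ioc ε M from ⟨hrε, hrM⟩),
          ← ENNReal.ofReal_mul (by positivity)]
        congr 1
        have hkey : r ^ ((d : ℝ) - 1) * r ^ (-(d : ℝ)) = r⁻¹ := by
          rw [← Real.rpow_add hr0, show (d : ℝ) - 1 + -(d : ℝ) = -1 by ring,
            Real.rpow_neg_one]
        rw [← Real.rpow_natCast r (d - 1), hcast, ← hkey]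
        ring
      · rw [if_neg hrM, indicator_of_notMem (by simp [hrM]), mul_zero]
    rw [setLIntegral_congr_fun measurableSet_Ioi hind,
      lintegral_indicator measurableSet_Ioc, Measure.restrict_restrict measurableSet_Ioc,
      inter_eq_self_of_subset_left (Ioc_subset_Ioi_self)]
    have hint : IntegrableOn (fun r : ℝ => ε * L * r⁻¹) (Ioc ε M) := by
      have hc : ContinuousOn (fun r : ℝ => ε * L * r⁻¹) (Icc ε M) :=
        (continuousOn_const.mul (continuousOn_inv₀.mono
          (fun r hr => ne_of_gt (hε.trans_le hr.1))))
      exact (hc.integrableOn_compact isCompact_Icc).mono_set Ioc_subset_Icc_self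
    rw [← ofReal_integral_eq_lintegral_ofReal hint]
    · apply ENNReal.ofReal_le_ofReal
      rw [MeasureTheory.integral_const_mul]
      have hval : ∫ r in Ioc ε M, r⁻¹ = Real.log (M / ε) := by
        rw [← intervalIntegral.integral_of_le hεM, integral_inv_of_pos hε hM]
      rw [hval]
      exact mul_le_mul_of_nonneg_left hlog (by positivity)
    · filter_upwards [ae_restrict_mem measurableSet_Ioc] with r hr
      have : (0:ℝ) < r := hε.trans hr.1
      positivity
  calc ∫⁻ r in Ioi (0 : ℝ), F r = ENNReal.ofReal ε + ∫⁻ r in Ioi ε, F r := by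
        rw [hsplit, h1]
    _ ≤ ENNReal.ofReal (ε * L ^ 2) + ENNReal.ofReal (ε * L * L) := by
        exact add_le_add (ENNReal.ofReal_le_ofReal (by
          nlinarith [mul_nonneg (mul_nonneg hε.le (sub_nonneg.2 hL)) (by linarith : (0:ℝ) ≤ L + 1)])) h2
    _ = ENNReal.ofReal (2 * (ε * L ^ 2)) := by
        rw [← ENNReal.ofReal_add (by positivity) (by positivity)]
        congr 1; ring

/-- Bound for the kernel K_ε:
sup_{x∈Ω} ∫_Ω K_ε(x,y) dy ≤ C(d)·ε·(ln(M/ε+2))², where K_ε(x,y) is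
ε·|x−y|^{−d}·ln(|x−y|/ε+2) for |x−y| ≥ ε and |x−y|^{1−d} for |x−y| < ε. -/
theorem stmt_4 (d : ℕ) (hd : 2 ≤ d) :
    ∃ C : ℝ, 0 < C ∧ ∀ (Ω : Set (E d)) (M ε : ℝ),
      MeasurableSet Ω → IsBounded Ω → Metric.diam Ω ≤ M → 0 < ε → ε ≤ M →
      ∀ x ∈ Ω,
        (∫ y in Ω,
          (if ε ≤ dist x y then
            ε * (dist x y) ^ (-(d : ℝ)) * Real.log (dist x y / ε + 2)
          else (dist x y) ^ (1 - (d : ℝ))))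
          ≤ C * ε * (Real.log (M / ε + 2)) ^ 2 := by
  have hd0 : 0 < d := by omega
  haveI : Nontrivial (E d) := Module.nontrivial_of_finrank_pos (R := ℝ)
    (by rw [finrank_euclideanSpace_fin]; omega)
  set W : ℝ := (volume (ball (0 : E d) 1)).toReal with hW
  refine ⟨2 * d * W + 1, by positivity, ?_⟩
  intro Ω M ε hΩ hbdd hdiam hε hεM x hx
  have hM : 0 < M := hε.trans_le hεM
  set L : ℝ := Real.log (M / ε + 2) with hLdef
  have hL1 : 1 ≤ L := by
    rw [hLdef, Real.le_log_iff_exp_le (by positivity)]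
    have h1 : (1 : ℝ) ≤ M / ε := (one_le_div hε).2 hεM
    have := Real.exp_one_lt_d9
    nlinarith
  have hL0 : 0 < L := lt_of_lt_of_le one_pos hL1
  -- the radial majorant
  set G : ℝ → ℝ≥0∞ := fun r =>
    if r < ε then ENNReal.ofReal (r ^ (1 - (d : ℝ)))
    else if r ≤ M then ENNReal.ofReal (ε * L * r ^ (-(d : ℝ))) else 0 with hGdef
  have hGmeas : Measurable G := by
    have h1 : Measurable fun r : ℝ => r ^ (1 - (d : ℝ)) := measurable_id.pow_const _
    have h2 : Measurable fun r : ℝ => ε * L * r ^ (-(d : ℝ)) :=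
      measurable_const.mul (measurable_id.pow_const _)
    exact Measurable.ite (measurableSet_lt measurable_id measurable_const) h1.ennreal_ofReal
      (Measurable.ite (measurableSet_le measurable_id measurable_const) h2.ennreal_ofReal
        measurable_const)
  -- notation for the kernel
  set f : E d → ℝ := fun y =>
    if ε ≤ dist x y then ε * (dist x y) ^ (-(d : ℝ)) * Real.log (dist x y / ε + 2)
    else (dist x y) ^ (1 - (d : ℝ)) with hfdef
  have hdm : Measurable fun y : E d => dist x y := measurable_const.dist measurable_id
  have hfmeas : Measurable f := by
    have h1 : Measurable fun y : E d => ε * (dist x y) ^ (-(d : ℝ)) *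
        Real.log (dist x y / ε + 2) :=
      (measurable_const.mul (hdm.pow_const _)).mul (((hdm.div_const ε).add_const 2).log)
    have h2 : Measurable fun y : E d => (dist x y) ^ (1 - (d : ℝ)) := hdm.pow_const _
    exact Measurable.ite (measurableSet_le measurable_const hdm) h1 h2
  have hfnonneg : ∀ y, 0 ≤ f y := by
    intro y
    rw [hfdef]
    dsimp only
    split_ifs with h
    · have h2 : (1 : ℝ) ≤ dist x y / ε + 2 := by
        have : (0:ℝ) ≤ dist x y / ε := by positivity
        linarith
      have := Real.log_nonneg h2
      have := Real.rpow_nonneg (dist_nonneg : (0:ℝ) ≤ dist x y) (-(d:ℝ))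
      positivity
    · exact Real.rpow_nonneg dist_nonneg _
  -- pointwise domination
  have hpt : ∀ y ∈ Ω, ENNReal.ofReal (f y) ≤ G (dist x y) := by
    intro y hy
    have hdM : dist x y ≤ M := (dist_le_diam_of_mem hbdd hx hy).trans hdiam
    rw [hfdef, hGdef]
    dsimp only
    by_cases h : ε ≤ dist x y
    · rw [if_pos h, if_neg (not_lt.2 h), if_pos hdM]
      apply ENNReal.ofReal_le_ofReal
      have hlog : Real.log (dist x y / ε + 2) ≤ L := by
        rw [hLdef]
        apply Real.log_le_log (by positivity)
        have hdiv : dist x y / ε ≤ M / ε := by gcongr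
        linarith
      have hpow : (0:ℝ) ≤ (dist x y) ^ (-(d:ℝ)) := Real.rpow_nonneg dist_nonneg _
      calc ε * (dist x y) ^ (-(d:ℝ)) * Real.log (dist x y / ε + 2)
          ≤ ε * (dist x y) ^ (-(d:ℝ)) * L := by
            exact mul_le_mul_of_nonneg_left hlog (by positivity)
        _ = ε * L * (dist x y) ^ (-(d:ℝ)) := by ring
    · rw [if_neg h, if_pos (not_le.1 h)]
  -- the main lintegral estimate
  have hmain : ∫⁻ y in Ω, ENNReal.ofReal (f y)
      ≤ ENNReal.ofReal ((2 * d * W + 1) * ε * L ^ 2) := by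
    have step1 : ∫⁻ y in Ω, ENNReal.ofReal (f y) ≤ ∫⁻ y in Ω, G (dist x y) := by
      apply lintegral_mono_ae
      filter_upwards [ae_restrict_mem hΩ] with y hy using hpt y hy
    have step2 : ∫⁻ y in Ω, G (dist x y) ≤ ∫⁻ y, G (dist x y) :=
      setLIntegral_le_lintegral _ _
    have step3 : ∫⁻ y, G (dist x y) = ∫⁻ z : E d, G ‖z‖ := by
      have : ∀ y : E d, dist x y = ‖y - x‖ := by
        intro y; rw [dist_comm, dist_eq_norm]
      simp_rw [this, sub_eq_add_neg]
      exact lintegral_add_right_eq_self (fun z => G ‖z‖) (-x)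
    have step4 : ∫⁻ z : E d, G ‖z‖
        = (volume : Measure (E d)).toSphere univ *
          ∫⁻ r in Ioi (0 : ℝ), ENNReal.ofReal (r ^ (d - 1)) * G r := by
      rw [lintegral_fun_norm_addHaar' (volume : Measure (E d)) hGmeas,
        finrank_euclideanSpace_fin]
    have hlogle : Real.log (M / ε) ≤ L := by
      rw [hLdef]
      apply Real.log_le_log (by positivity)
      linarith
    have hradial := radial_bound d hd hε hεM hL1 hlogle
    have hsphere : (volume : Measure (E d)).toSphere univ
        = (d : ℝ≥0∞) * volume (ball (0 : E d) 1) := by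
      rw [Measure.toSphere_apply_univ, finrank_euclideanSpace_fin]
    have hballne : volume (ball (0 : E d) 1) ≠ ⊤ := measure_ball_lt_top.ne
    calc ∫⁻ y in Ω, ENNReal.ofReal (f y)
        ≤ (volume : Measure (E d)).toSphere univ *
          ∫⁻ r in Ioi (0 : ℝ), ENNReal.ofReal (r ^ (d - 1)) * G r := by
          rw [← step4, ← step3]; exact step1.trans step2
      _ ≤ ((d : ℝ≥0∞) * volume (ball (0 : E d) 1)) * ENNReal.ofReal (2 * (ε * L ^ 2)) := by
          rw [hsphere]; exact mul_le_mul_right hradial _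
      _ = ENNReal.ofReal ((d : ℝ) * W) * ENNReal.ofReal (2 * (ε * L ^ 2)) := by
          congr 1
          rw [ENNReal.ofReal_mul (by positivity), ENNReal.ofReal_natCast, hW,
            ENNReal.ofReal_toReal hballne]
      _ = ENNReal.ofReal ((d : ℝ) * W * (2 * (ε * L ^ 2))) := by
          rw [← ENNReal.ofReal_mul (by positivity)]
      _ ≤ ENNReal.ofReal ((2 * d * W + 1) * ε * L ^ 2) := by
          apply ENNReal.ofReal_le_ofReal
          have hW0 : 0 ≤ W := ENNReal.toReal_nonneg
          nlinarith [sq_nonneg L, mul_pos hε (mul_pos hL0 hL0)]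
  -- convert Bochner integral to lintegral
  have hrepr : (∫ y in Ω, f y)
      = (∫⁻ y in Ω, ENNReal.ofReal (f y)).toReal := by
    apply integral_eq_lintegral_of_nonneg_ae
    · exact ae_of_all _ hfnonneg
    · exact hfmeas.aestronglyMeasurable
  calc (∫ y in Ω, f y) = (∫⁻ y in Ω, ENNReal.ofReal (f y)).toReal := hrepr
    _ ≤ (2 * d * W + 1) * ε * L ^ 2 :=
        ENNReal.toReal_le_of_le_ofReal (by positivity) hmain
end
end

section
/- Let d ≥ 3, Ω ⊂ ℝ^d a bounded measurable set of diameter at most M, 0 < ε ≤ M, and F ∈ L^d(Ω). Suppose G : Ω × Ω → ℝ is measurable and satisfies |G(x,y)| ≤ C₀·|x−y|^{2−d} when |x−y| < ε and |G(x,y)| ≤ C₀·ε·|x−y|^{1−d} when |x−y| ≥ ε. Then for every x ∈ Ω, ∫_Ω |G(x,y)|·|F(y)| dy ≤ C·ε·(ln(M/ε + 2))^{1−1/d}·‖F‖_{L^d(Ω)}, where C depends only on d and C₀. -/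
open MeasureTheory Metric Bornology
open Set
open scoped ENNReal NNReal

noncomputable section

lemma lint_polar {d : ℕ} (hd : 1 ≤ d) (f : ℝ → ℝ≥0∞) (hf : Measurable f) :
    ∫⁻ x : E d, f ‖x‖ = (d : ℝ≥0∞) * volume (ball (0 : E d) 1) *
      ∫⁻ y in Set.Ioi (0:ℝ), ENNReal.ofReal (y ^ (d - 1)) * f y := by
  haveI : NeZero d := ⟨by omega⟩
  have hdim : Module.finrank ℝ (E d) = d := finrank_euclideanSpace_fin
  have hmeas : Measurable fun p : sphere (0 : E d) 1 × Ioi (0:ℝ) => f p.2.1 :=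
    hf.comp (measurable_subtype_coe.comp measurable_snd)
  have hfm : Measurable fun r : Ioi (0:ℝ) => f r.1 := hf.comp measurable_subtype_coe
  have hden : Measurable fun r : Ioi (0:ℝ) =>
      ENNReal.ofReal (r.1 ^ (Module.finrank ℝ (E d) - 1)) :=
    (measurable_subtype_coe.pow_const _).ennreal_ofReal
  calc ∫⁻ x : E d, f ‖x‖
      = ∫⁻ x in ({0}ᶜ : Set (E d)), f ‖x‖ := by rw [restrict_compl_singleton]
    _ = ∫⁻ x : ({0}ᶜ : Set (E d)), f ‖x.1‖ ∂((volume : Measure (E d)).comap (↑)) :=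
        (lintegral_subtype_comap (measurableSet_singleton _).compl (fun x => f ‖x‖)).symm
    _ = ∫⁻ p : sphere (0 : E d) 1 × Ioi (0:ℝ), f p.2.1
          ∂((volume : Measure (E d)).toSphere.prod
            (.volumeIoiPow (Module.finrank ℝ (E d) - 1))) := by
        rw [← (volume : Measure (E d)).measurePreserving_homeomorphUnitSphereProd.lintegral_comp
          hmeas]
        simp
    _ = (volume : Measure (E d)).toSphere univ *
          ∫⁻ r : Ioi (0:ℝ), f r.1 ∂(Measure.volumeIoiPow (Module.finrank ℝ (E d) - 1)) := by
        rw [lintegral_prod _ hmeas.aemeasurable]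
        simp [lintegral_const, mul_comm]
    _ = (volume : Measure (E d)).toSphere univ *
          ∫⁻ r : Ioi (0:ℝ), ENNReal.ofReal (r.1 ^ (Module.finrank ℝ (E d) - 1)) * f r.1
            ∂((volume : Measure ℝ).comap (↑)) := by
        rw [Measure.volumeIoiPow, lintegral_withDensity_eq_lintegral_mul _ hden hfm]
        rfl
    _ = (d : ℝ≥0∞) * volume (ball (0 : E d) 1) *
          ∫⁻ y in Set.Ioi (0:ℝ), ENNReal.ofReal (y ^ (d - 1)) * f y := by
        rw [lintegral_subtype_comap measurableSet_Ioi
          (fun y => ENNReal.ofReal (y ^ (Module.finrank ℝ (E d) - 1)) * f y),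
          Measure.toSphere_apply_univ, hdim]

lemma cast_sub_one {d : ℕ} (hd : 1 ≤ d) : (((d - 1 : ℕ)) : ℝ) = (d : ℝ) - 1 := by
  push_cast [Nat.cast_sub hd]; ring

lemma lint_ball_rpow {d : ℕ} (hd : 1 ≤ d) {s R : ℝ} (hs : -(d:ℝ) < s) (hR : 0 < R) :
    ∫⁻ z in ball (0 : E d) R, ENNReal.ofReal (‖z‖ ^ s)
      = (d : ℝ≥0∞) * volume (ball (0 : E d) 1) * ENNReal.ofReal (R ^ (s + d) / (s + d)) := by
  have hmf : Measurable fun r : ℝ => (Iio R).indicator (fun r => ENNReal.ofReal (r ^ s)) r := by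
    apply Measurable.indicator _ measurableSet_Iio
    measurability
  have hsd : (0:ℝ) < s + d := by linarith
  have ht : (-1:ℝ) < (d:ℝ) - 1 + s := by linarith
  have key : ∫⁻ z in ball (0 : E d) R, ENNReal.ofReal (‖z‖ ^ s)
      = ∫⁻ z : E d, (Iio R).indicator (fun r => ENNReal.ofReal (r ^ s)) ‖z‖ := by
    rw [← lintegral_indicator (measurableSet_ball)]
    congr 1
    ext z
    by_cases h : z ∈ ball (0:E d) R
    · rw [indicator_of_mem h, indicator_of_mem (mem_Iio.mpr (mem_ball_zero_iff.mp h))]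
    · rw [indicator_of_notMem h,
        indicator_of_notMem (fun hc => h (mem_ball_zero_iff.mpr (mem_Iio.mp hc)))]
  rw [key, lint_polar hd _ hmf]
  congr 1
  have e1 : ∀ y : ℝ, ENNReal.ofReal (y ^ (d - 1)) *
        (Iio R).indicator (fun r => ENNReal.ofReal (r ^ s)) y
      = (Iio R).indicator (fun r => ENNReal.ofReal (r ^ (d-1)) * ENNReal.ofReal (r ^ s)) y := by
    intro y
    by_cases h : y ∈ Iio R
    · rw [indicator_of_mem h, indicator_of_mem h]
    · rw [indicator_of_notMem h, indicator_of_notMem h, mul_zero]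
  simp only [e1]
  rw [lintegral_indicator measurableSet_Iio, Measure.restrict_restrict measurableSet_Iio,
    Set.Iio_inter_Ioi]
  have e2 : ∀ y ∈ Ioo (0:ℝ) R, ENNReal.ofReal (y ^ (d-1)) * ENNReal.ofReal (y ^ s)
      = ENNReal.ofReal (y ^ ((d:ℝ) - 1 + s)) := by
    intro y hy
    rw [← ENNReal.ofReal_mul (pow_nonneg hy.1.le _), ← Real.rpow_natCast y (d-1),
      ← Real.rpow_add hy.1, cast_sub_one hd]
  rw [setLIntegral_congr_fun measurableSet_Ioo e2]
  have hint : IntegrableOn (fun y : ℝ => y ^ ((d:ℝ) - 1 + s)) (Ioo 0 R) := by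
    have := (intervalIntegral.intervalIntegrable_rpow' (a := 0) (b := R) ht)
    rw [intervalIntegrable_iff'] at this
    exact this.mono_set (Ioo_subset_Icc_self.trans (Set.Icc_subset_uIcc))
  rw [← ofReal_integral_eq_lintegral_ofReal hint]
  · congr 1
    rw [← integral_Ioc_eq_integral_Ioo, ← intervalIntegral.integral_of_le hR.le,
      integral_rpow (Or.inl ht),
      Real.zero_rpow (ne_of_gt (by linarith : (0:ℝ) < (d:ℝ) - 1 + s + 1))]
    rw [show (d:ℝ) - 1 + s + 1 = s + d by ring, sub_zero]
  · filter_upwards [ae_restrict_mem measurableSet_Ioo] with y hy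
    exact Real.rpow_nonneg hy.1.le _

lemma lint_annulus {d : ℕ} (hd : 1 ≤ d) {r R : ℝ} (hr : 0 < r) (hrR : r ≤ R) :
    ∫⁻ z in closedBall (0 : E d) R \ ball (0:E d) r, ENNReal.ofReal (‖z‖ ^ (-(d:ℝ)))
      = (d : ℝ≥0∞) * volume (ball (0 : E d) 1) * ENNReal.ofReal (Real.log (R / r)) := by
  have hmf : Measurable fun t : ℝ =>
      (Icc r R).indicator (fun t => ENNReal.ofReal (t ^ (-(d:ℝ)))) t := by
    apply Measurable.indicator _ measurableSet_Icc
    measurability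
  have key : ∫⁻ z in closedBall (0 : E d) R \ ball (0:E d) r, ENNReal.ofReal (‖z‖ ^ (-(d:ℝ)))
      = ∫⁻ z : E d, (Icc r R).indicator (fun t => ENNReal.ofReal (t ^ (-(d:ℝ)))) ‖z‖ := by
    rw [← lintegral_indicator (measurableSet_closedBall.diff measurableSet_ball)]
    congr 1
    ext z
    have hiff : z ∈ closedBall (0:E d) R \ ball (0:E d) r ↔ ‖z‖ ∈ Icc r R := by
      simp only [mem_diff, mem_closedBall_zero_iff, mem_ball_zero_iff, not_lt, mem_Icc]
      tauto
    by_cases h : z ∈ closedBall (0:E d) R \ ball (0:E d) r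
    · rw [indicator_of_mem h, indicator_of_mem (hiff.mp h)]
    · rw [indicator_of_notMem h, indicator_of_notMem (fun hc => h (hiff.mpr hc))]
  rw [key, lint_polar hd _ hmf]
  congr 1
  have e1 : ∀ y : ℝ, ENNReal.ofReal (y ^ (d - 1)) *
        (Icc r R).indicator (fun t => ENNReal.ofReal (t ^ (-(d:ℝ)))) y
      = (Icc r R).indicator
          (fun t => ENNReal.ofReal (t ^ (d-1)) * ENNReal.ofReal (t ^ (-(d:ℝ)))) y := by
    intro y
    by_cases h : y ∈ Icc r R
    · rw [indicator_of_mem h, indicator_of_mem h]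
    · rw [indicator_of_notMem h, indicator_of_notMem h, mul_zero]
  simp only [e1]
  have hsub : Icc r R ∩ Ioi 0 = Icc r R :=
    inter_eq_left.mpr (fun y hy => mem_Ioi.mpr (lt_of_lt_of_le hr hy.1))
  rw [lintegral_indicator measurableSet_Icc, Measure.restrict_restrict measurableSet_Icc, hsub]
  have e2 : ∀ y ∈ Icc r R, ENNReal.ofReal (y ^ (d-1)) * ENNReal.ofReal (y ^ (-(d:ℝ)))
      = ENNReal.ofReal y⁻¹ := by
    intro y hy
    have hy0 : 0 < y := lt_of_lt_of_le hr hy.1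
    rw [← ENNReal.ofReal_mul (pow_nonneg hy0.le _), ← Real.rpow_natCast y (d-1),
      ← Real.rpow_add hy0, cast_sub_one hd,
      show ((d:ℝ) - 1 : ℝ) + -(d:ℝ) = -1 by ring, Real.rpow_neg_one y]
  rw [setLIntegral_congr_fun measurableSet_Icc e2]
  have hint : IntegrableOn (fun y : ℝ => y⁻¹) (Icc r R) := by
    apply ContinuousOn.integrableOn_compact isCompact_Icc
    exact continuousOn_inv₀.mono (fun y hy => ne_of_gt (lt_of_lt_of_le hr hy.1))
  rw [← ofReal_integral_eq_lintegral_ofReal hint]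
  · congr 1
    rw [integral_Icc_eq_integral_Ioc, ← intervalIntegral.integral_of_le hrR,
      integral_inv (by
        intro hc
        rcases hc with hc
        have := Set.mem_uIcc.mp hc
        rcases this with ⟨h1, h2⟩ | ⟨h1, h2⟩ <;> linarith)]
  · filter_upwards [ae_restrict_mem measurableSet_Icc] with y hy
    have hy0 : 0 < y := lt_of_lt_of_le hr hy.1
    positivity

lemma integral_le_toReal_lintegral {α : Type*} [MeasurableSpace α] (μ : Measure α)
    (f : α → ℝ) (hf : ∀ a, 0 ≤ f a) :
    ∫ a, f a ∂μ ≤ (∫⁻ a, ENNReal.ofReal (f a) ∂μ).toReal := by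
  by_cases h : Integrable f μ
  · rw [integral_eq_lintegral_of_nonneg_ae (Filter.Eventually.of_forall hf)
      h.aestronglyMeasurable]
  · rw [integral_undef h]; exact ENNReal.toReal_nonneg

lemma shift_lint {d : ℕ} (x : E d) (S : Set (E d)) (φ : ℝ → ℝ≥0∞) :
    ∫⁻ y in S, φ (dist x y) = ∫⁻ z in ((fun z => z + x) ⁻¹' S), φ ‖z‖ := by
  have h := MeasurePreserving.setLIntegral_comp_preimage_emb
    (measurePreserving_add_right volume x)
    ((MeasurableEquiv.addRight x).measurableEmbedding) (fun y => φ (dist x y)) S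
  rw [← h]
  apply lintegral_congr
  intro z
  rw [dist_comm, dist_eq_norm, add_sub_cancel_right]

/-- If |G(x,y)| ≤ C₀|x−y|^{2−d} for |x−y| < ε and |G(x,y)| ≤ C₀ ε |x−y|^{1−d} for
|x−y| ≥ ε, then ∫_Ω |G(x,y)||F(y)| dy ≤ C ε (ln(M/ε+2))^{1−1/d} ‖F‖_{L^d(Ω)}. -/
theorem stmt_5 (d : ℕ) (hd : 3 ≤ d) (C₀ : ℝ) (hC₀ : 0 < C₀) :
    ∃ C : ℝ, 0 < C ∧ ∀ (Ω : Set (E d)) (M ε : ℝ) (F : E d → ℝ) (G : E d → E d → ℝ),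
      MeasurableSet Ω → IsBounded Ω → Metric.diam Ω ≤ M → 0 < ε → ε ≤ M →
      Measurable (Function.uncurry G) →
      MemLp F (d : ℝ≥0∞) (volume.restrict Ω) →
      (∀ x ∈ Ω, ∀ y ∈ Ω, dist x y < ε → |G x y| ≤ C₀ * (dist x y) ^ (2 - (d : ℝ))) →
      (∀ x ∈ Ω, ∀ y ∈ Ω, ε ≤ dist x y → |G x y| ≤ C₀ * ε * (dist x y) ^ (1 - (d : ℝ))) →
      ∀ x ∈ Ω,
        (∫ y in Ω, |G x y| * |F y|)
          ≤ C * ε * (Real.log (M / ε + 2)) ^ (1 - 1 / (d : ℝ)) *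
              (eLpNorm F (d : ℝ≥0∞) (volume.restrict Ω)).toReal := by
  have hd1n : 1 ≤ d := by omega
  have hd0 : (0:ℝ) < d := by exact_mod_cast (by omega : 0 < d)
  have hd1 : (1:ℝ) < (d:ℝ) := by exact_mod_cast (by omega : 1 < d)
  set ν := volume (ball (0 : E d) 1) with hν
  have hνpos : 0 < ν := measure_ball_pos _ _ one_pos
  have hνtop : ν ≠ ⊤ := measure_ball_lt_top.ne
  set κ : ℝ := (d : ℝ) * ν.toReal with hκ
  have hκpos : 0 < κ := mul_pos hd0 (ENNReal.toReal_pos hνpos.ne' hνtop)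
  set q : ℝ := (d:ℝ)/((d:ℝ)-1) with hq
  have hpq : ((d:ℝ)).HolderConjugate q := (Real.holderConjugate_iff_eq_conjExponent hd1).2 rfl
  have hq1 : 1 < q := hpq.symm.lt
  have hq0 : 0 < q := by linarith
  have hqinv : 1/q = 1 - 1/(d:ℝ) := by
    rw [hq]; field_simp
  have hne : (d:ℝ) - 1 ≠ 0 := by linarith
  have hexp1 : (2 - (d:ℝ)) * q + d = q := by
    rw [hq]; field_simp; ring
  have hexp2 : (1 - (d:ℝ)) * q = -(d:ℝ) := by
    rw [hq]; field_simp; ring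
  have hCpos : (0:ℝ) < (2 * C₀ ^ q * κ) ^ (1/q) :=
    Real.rpow_pos_of_pos (mul_pos (mul_pos two_pos (Real.rpow_pos_of_pos hC₀ q)) hκpos) _
  refine ⟨(2 * C₀ ^ q * κ) ^ (1/q), hCpos, ?_⟩
  intro Ω M ε F G hΩ hbdd hdiam hε hεM hGmeas hF hG1 hG2 x hx
  set C : ℝ := (2 * C₀ ^ q * κ) ^ (1/q) with hC
  set L : ℝ := Real.log (M / ε + 2) with hLdef
  have hM : 0 < M := lt_of_lt_of_le hε hεM
  have hL1 : 1 ≤ L := by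
    apply (Real.le_log_iff_exp_le (by positivity)).mpr
    have h2 : (1:ℝ) ≤ M/ε := (one_le_div hε).mpr hεM
    have := Real.exp_one_lt_d9
    linarith
  have hL0 : 0 < L := lt_of_lt_of_le one_pos hL1
  set μΩ := volume.restrict Ω with hμΩ
  set g : E d → ℝ≥0∞ := fun y => ENNReal.ofReal |G x y| with hgdef
  set fF : E d → ℝ≥0∞ := fun y => ENNReal.ofReal |F y| with hfFdef
  have hGx : Measurable fun y => G x y := hGmeas.of_uncurry_left
  have hgm : Measurable g := (measurable_abs.comp hGx).ennreal_ofReal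
  have hfm : AEMeasurable fF μΩ :=
    ENNReal.measurable_ofReal.comp_aemeasurable
      (continuous_abs.measurable.comp_aemeasurable hF.1.aemeasurable)
  set Ig := ∫⁻ y, g y ^ q ∂μΩ with hIgdef
  -- Hölder
  have holder : ∫⁻ y, (g y) * (fF y) ∂μΩ
      ≤ Ig ^ (1/q) * (∫⁻ y, fF y ^ (d:ℝ) ∂μΩ) ^ (1/(d:ℝ)) := by
    exact ENNReal.lintegral_mul_le_Lp_mul_Lq μΩ hpq.symm hgm.aemeasurable hfm
  have heLp : (∫⁻ y, fF y ^ (d:ℝ) ∂μΩ) ^ (1/(d:ℝ)) = eLpNorm F (d : ℝ≥0∞) μΩ := by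
    rw [eLpNorm_eq_lintegral_rpow_enorm_toReal (by exact_mod_cast Nat.cast_ne_zero.mpr (by omega))
      (ENNReal.natCast_ne_top d)]
    simp only [ENNReal.toReal_natCast, hfFdef]
    congr 1
    apply lintegral_congr
    intro y
    rw [Real.enorm_eq_ofReal_abs]
  -- kernel bound
  set K : E d → ℝ≥0∞ := fun y =>
    if dist x y < ε then ENNReal.ofReal (C₀ * dist x y ^ (2 - (d:ℝ))) ^ q
    else ENNReal.ofReal (C₀ * ε * dist x y ^ (1 - (d:ℝ))) ^ q with hKdef
  have hgK : Ig ≤ ∫⁻ y, K y ∂μΩ := by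
    apply lintegral_mono_ae
    filter_upwards [ae_restrict_mem hΩ] with y hy
    by_cases h : dist x y < ε
    · rw [hKdef]; simp only [if_pos h]
      exact ENNReal.rpow_le_rpow (ENNReal.ofReal_le_ofReal (hG1 x hx y hy h)) hq0.le
    · rw [hKdef]; simp only [if_neg h]
      exact ENNReal.rpow_le_rpow (ENNReal.ofReal_le_ofReal (hG2 x hx y hy (not_lt.mp h))) hq0.le
  have hsplit : ∫⁻ y, K y ∂μΩ
      ≤ (∫⁻ y in ball x ε, K y) + ∫⁻ y in closedBall x M \ ball x ε, K y := by
    refine le_trans ?_ (lintegral_union_le _ _ _)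
    rw [hμΩ]
    apply lintegral_mono_set
    intro y hy
    by_cases h : y ∈ ball x ε
    · exact Or.inl h
    · refine Or.inr ⟨?_, h⟩
      exact mem_closedBall'.mpr ((dist_le_diam_of_mem hbdd hx hy).trans hdiam)
  have hκ' : (d : ℝ≥0∞) * ν = ENNReal.ofReal κ := by
    rw [hκ, ENNReal.ofReal_mul (by positivity), ENNReal.ofReal_toReal hνtop,
      ENNReal.ofReal_natCast]
  -- near part
  have hIA : ∫⁻ y in ball x ε, K y ≤ ENNReal.ofReal (C₀^q * (κ * ε ^ q)) := by
    have e0 : ∀ y ∈ ball x ε, K y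
        = ENNReal.ofReal (C₀^q) * ENNReal.ofReal (dist x y ^ ((2 - (d:ℝ)) * q)) := by
      intro y hy
      rw [hKdef]
      simp only [if_pos (mem_ball'.mp hy)]
      rw [ENNReal.ofReal_rpow_of_nonneg (by positivity) hq0.le,
        Real.mul_rpow hC₀.le (Real.rpow_nonneg dist_nonneg _),
        ← Real.rpow_mul dist_nonneg,
        ENNReal.ofReal_mul (by positivity)]
    rw [setLIntegral_congr_fun measurableSet_ball e0,
      lintegral_const_mul' _ _ ENNReal.ofReal_ne_top,
      shift_lint x (ball x ε) (fun r => ENNReal.ofReal (r ^ ((2 - (d:ℝ)) * q))),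
      show (fun z : E d => z + x) ⁻¹' ball x ε = ball 0 ε by
        ext z; simp [mem_ball, dist_eq_norm],
      lint_ball_rpow hd1n (by linarith) hε, hexp1, hκ',
      ← ENNReal.ofReal_mul (by positivity), ← ENNReal.ofReal_mul (by positivity)]
    apply ENNReal.ofReal_le_ofReal
    have h1 : ε ^ q / q ≤ ε ^ q := div_le_self (Real.rpow_nonneg hε.le q) hq1.le
    have h2 : (0:ℝ) ≤ C₀ ^ q * κ := by positivity
    calc C₀ ^ q * (κ * (ε ^ q / q)) = (C₀ ^ q * κ) * (ε ^ q / q) := by ring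
      _ ≤ (C₀ ^ q * κ) * ε ^ q := mul_le_mul_of_nonneg_left h1 h2
      _ = C₀^q * (κ * ε ^ q) := by ring
  -- far part
  have hIB : ∫⁻ y in closedBall x M \ ball x ε, K y
      ≤ ENNReal.ofReal (C₀^q * (κ * (ε ^ q * L))) := by
    have e0 : ∀ y ∈ closedBall x M \ ball x ε, K y
        = ENNReal.ofReal ((C₀ * ε)^q) * ENNReal.ofReal (dist x y ^ (-(d:ℝ))) := by
      intro y hy
      have hnl : ¬ dist x y < ε := by
        rw [dist_comm]
        exact fun hc => hy.2 (mem_ball.mpr hc)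
      rw [hKdef]
      simp only [if_neg hnl]
      rw [ENNReal.ofReal_rpow_of_nonneg (by positivity) hq0.le,
        Real.mul_rpow (by positivity) (Real.rpow_nonneg dist_nonneg _),
        ← Real.rpow_mul dist_nonneg, hexp2,
        ENNReal.ofReal_mul (by positivity)]
    rw [setLIntegral_congr_fun (measurableSet_closedBall.diff measurableSet_ball)
        e0,
      lintegral_const_mul' _ _ ENNReal.ofReal_ne_top,
      shift_lint x _ (fun r => ENNReal.ofReal (r ^ (-(d:ℝ)))),
      show (fun z : E d => z + x) ⁻¹' (closedBall x M \ ball x ε)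
          = closedBall 0 M \ ball 0 ε by
        ext z; simp [mem_ball, mem_closedBall, dist_eq_norm],
      lint_annulus hd1n hε hεM, hκ',
      ← ENNReal.ofReal_mul (by positivity), ← ENNReal.ofReal_mul (by positivity)]
    apply ENNReal.ofReal_le_ofReal
    have hlog : Real.log (M/ε) ≤ L := by
      rw [hLdef]
      exact Real.log_le_log (by positivity) (by linarith)
    have hlog0 : 0 ≤ Real.log (M/ε) := Real.log_nonneg ((one_le_div hε).mpr hεM)
    have hmr : (C₀ * ε)^q = C₀^q * ε^q := Real.mul_rpow hC₀.le hε.le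
    calc (C₀ * ε)^q * (κ * Real.log (M/ε)) ≤ (C₀ * ε)^q * (κ * L) := by
          apply mul_le_mul_of_nonneg_left (mul_le_mul_of_nonneg_left hlog hκpos.le)
            (Real.rpow_nonneg (by positivity) q)
      _ = C₀^q * (κ * (ε ^ q * L)) := by rw [hmr]; ring
  -- total kernel estimate
  have hIg : Ig ≤ ENNReal.ofReal (2 * C₀ ^ q * κ * ε ^ q * L) := by
    refine (hgK.trans hsplit).trans ?_
    refine (add_le_add hIA hIB).trans ?_
    rw [← ENNReal.ofReal_add (by positivity) (by positivity)]
    apply ENNReal.ofReal_le_ofReal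
    have hP : (0:ℝ) ≤ C₀^q * κ * ε^q := by positivity
    calc C₀ ^ q * (κ * ε ^ q) + C₀ ^ q * (κ * (ε ^ q * L))
        = (C₀^q * κ * ε^q) * (1 + L) := by ring
      _ ≤ (C₀^q * κ * ε^q) * (2 * L) := mul_le_mul_of_nonneg_left (by linarith) hP
      _ = 2 * C₀ ^ q * κ * ε ^ q * L := by ring
  have hIgq : Ig ^ (1/q) ≤ ENNReal.ofReal (C * ε * L ^ (1/q)) := by
    calc Ig ^ (1/q) ≤ (ENNReal.ofReal (2 * C₀ ^ q * κ * ε ^ q * L)) ^ (1/q) :=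
          ENNReal.rpow_le_rpow hIg (by positivity)
      _ = ENNReal.ofReal ((2 * C₀ ^ q * κ * ε ^ q * L) ^ (1/q)) :=
          ENNReal.ofReal_rpow_of_nonneg (by positivity) (by positivity)
      _ = ENNReal.ofReal (C * ε * L ^ (1/q)) := by
          congr 1
          rw [show 2 * C₀ ^ q * κ * ε ^ q * L = ((2 * C₀ ^ q * κ) * ε ^ q) * L by ring,
            Real.mul_rpow (by positivity) hL0.le,
            Real.mul_rpow (by positivity) (Real.rpow_nonneg hε.le q),
            ← Real.rpow_mul hε.le, mul_one_div_cancel (ne_of_gt hq0), Real.rpow_one, ← hC]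
  have hfin1 : Ig ^ (1/q) ≠ ⊤ := (lt_of_le_of_lt hIgq ENNReal.ofReal_lt_top).ne
  have hfin2 : eLpNorm F (d:ℝ≥0∞) μΩ ≠ ⊤ := hF.2.ne
  calc ∫ y in Ω, |G x y| * |F y|
      ≤ (∫⁻ y, ENNReal.ofReal (|G x y| * |F y|) ∂μΩ).toReal :=
        integral_le_toReal_lintegral μΩ _ (fun y => mul_nonneg (abs_nonneg _) (abs_nonneg _))
    _ = (∫⁻ y, g y * fF y ∂μΩ).toReal := by
        congr 1
        apply lintegral_congr
        intro y
        rw [ENNReal.ofReal_mul (abs_nonneg _)]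
    _ ≤ (Ig ^ (1/q) * eLpNorm F (d:ℝ≥0∞) μΩ).toReal := by
        apply ENNReal.toReal_mono (ENNReal.mul_ne_top hfin1 hfin2)
        rw [← heLp]
        exact holder
    _ = (Ig ^ (1/q)).toReal * (eLpNorm F (d:ℝ≥0∞) μΩ).toReal := ENNReal.toReal_mul
    _ ≤ (C * ε * L ^ (1/q)) * (eLpNorm F (d:ℝ≥0∞) μΩ).toReal := by
        apply mul_le_mul_of_nonneg_right _ ENNReal.toReal_nonneg
        calc (Ig ^ (1/q)).toReal ≤ (ENNReal.ofReal (C * ε * L ^ (1/q))).toReal :=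
              ENNReal.toReal_mono ENNReal.ofReal_ne_top hIgq
          _ = C * ε * L ^ (1/q) := ENNReal.toReal_ofReal (by positivity)
    _ = C * ε * L ^ (1 - 1/(d:ℝ)) * (eLpNorm F (d:ℝ≥0∞) μΩ).toReal := by rw [hqinv]
end
end

section
/- Let Ω ⊂ ℝ^d be a bounded convex open set with diameter M, let 0 < ε ≤ M, and let H : Ω → ℝ^m be differentiable with |∇H(x)| ≤ C₀·min{1, ε/dist(x, ∂Ω)} for all x ∈ Ω. Then for all x, y ∈ Ω, |H(x) − H(y)| ≤ C·ε·ln(M/ε + 2), where C depends only on d, m, C₀, and Ω. -/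
open MeasureTheory Metric Bornology
open scoped ENNReal NNReal

noncomputable section

/-- If H is differentiable on a bounded convex open Ω with
|∇H(x)| ≤ C₀ min{1, ε/dist(x,∂Ω)}, then |H(x) − H(y)| ≤ C ε ln(M/ε + 2). -/
theorem stmt_7 (d m : ℕ) (C₀ : ℝ) (hC₀ : 0 < C₀) (Ω : Set (E d))
    (hΩo : IsOpen Ω) (hΩc : Convex ℝ Ω) (hΩb : IsBounded Ω) (hne : Ω.Nonempty) :
    ∃ C : ℝ, 0 < C ∧ ∀ (M ε : ℝ) (H : E d → E m),
      Metric.diam Ω = M → 0 < ε → ε ≤ M →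
      (∀ x ∈ Ω, DifferentiableAt ℝ H x) →
      (∀ x ∈ Ω, ‖fderiv ℝ H x‖ ≤ C₀ * min 1 (ε / infDist x (frontier Ω))) →
      ∀ x ∈ Ω, ∀ y ∈ Ω, ‖H x - H y‖ ≤ C * ε * Real.log (M / ε + 2) := by
  obtain ⟨z₀, hz₀⟩ := hne
  obtain ⟨r, hr, hball⟩ := Metric.isOpen_iff.1 hΩo z₀ hz₀
  set D := Metric.diam Ω with hD
  set r' := min r D with hr'def
  have hDnn : 0 ≤ D := Metric.diam_nonneg
  have hr'nn : 0 ≤ r' := le_min hr.le hDnn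
  refine ⟨4 * C₀ * D / r' + 1,
    add_pos_of_nonneg_of_pos (div_nonneg (by positivity) hr'nn) one_pos, ?_⟩
  rintro M ε H rfl hε hεM hdiff hbound x hx y hy
  have hD0 : 0 < D := lt_of_lt_of_le hε hεM
  have hr'0 : 0 < r' := lt_min hr hD0
  have hr'D : r' ≤ D := min_le_right _ _
  have hballr' : Metric.ball z₀ r' ⊆ Ω := (Metric.ball_subset_ball (min_le_left _ _)).trans hball
  -- the space is nontrivial
  have hnt : Nontrivial (E d) := by
    by_contra h
    rw [not_nontrivial_iff_subsingleton] at h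
    have : D = 0 := Metric.diam_subsingleton (fun a _ b _ => Subsingleton.elim a b)
    exact absurd this hD0.ne'
  -- the frontier is nonempty
  have hfr : (frontier Ω).Nonempty := by
    rw [nonempty_frontier_iff]
    refine ⟨⟨z₀, hz₀⟩, fun h => ?_⟩
    rw [h] at hΩb
    exact NormedSpace.unbounded_univ ℝ (E d) hΩb
  set a := ε / r' with ha
  have ha0 : 0 < a := div_pos hε hr'0
  -- key segment estimate
  have key : ∀ w ∈ Ω, ‖H w - H z₀‖ ≤ 2 * (C₀ * D) * a * Real.log (1 + 1 / a) := by
    intro w hw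
    set γ : ℝ → E d := fun t => w + t • (z₀ - w) with hγdef
    have hγmem : ∀ t ∈ Set.Icc (0:ℝ) 1, γ t ∈ Ω := by
      rintro t ⟨ht0, ht1⟩
      have hmem := hΩc hw hz₀ (by linarith : (0:ℝ) ≤ 1 - t) ht0 (by ring)
      have : (1 - t) • w + t • z₀ = γ t := by simp only [hγdef]; module
      rwa [this] at hmem
    have hγder : ∀ t : ℝ, HasDerivAt γ (z₀ - w) t := by
      intro t
      simpa [hγdef] using ((hasDerivAt_id t).smul_const (z₀ - w)).const_add w
    have hfder : ∀ t ∈ Set.Icc (0:ℝ) 1,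
        HasDerivAt (fun s => H (γ s) - H (γ 0)) (fderiv ℝ H (γ t) (z₀ - w)) t := by
      intro t ht
      exact (((hdiff _ (hγmem t ht)).hasFDerivAt).comp_hasDerivAt t (hγder t)).sub_const _
    -- ball around γ t of radius t * r' is inside Ω
    have hsub : ∀ t ∈ Set.Icc (0:ℝ) 1, Metric.ball (γ t) (t * r') ⊆ Ω := by
      rintro t ⟨ht0, ht1⟩ u hu
      rcases eq_or_lt_of_le ht0 with h | h
      · rw [← h, zero_mul, Metric.ball_zero] at hu
        exact absurd hu (Set.notMem_empty u)
      · have htne : t ≠ 0 := h.ne'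
        have hz' : z₀ + t⁻¹ • (u - γ t) ∈ Metric.ball z₀ r' := by
          rw [Metric.mem_ball, dist_eq_norm, add_sub_cancel_left, norm_smul, norm_inv,
            Real.norm_eq_abs, abs_of_pos h]
          have hu' : ‖u - γ t‖ < t * r' := by
            rw [← dist_eq_norm]; exact Metric.mem_ball.1 hu
          calc t⁻¹ * ‖u - γ t‖ < t⁻¹ * (t * r') := by
                exact mul_lt_mul_of_pos_left hu' (inv_pos.2 h)
            _ = r' := by field_simp
        have hmem := hΩc hw (hballr' hz') (by linarith : (0:ℝ) ≤ 1 - t) ht0 (by ring)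
        have hexp : (1 - t) • w + t • (z₀ + t⁻¹ • (u - γ t)) = u := by
          rw [smul_add, smul_smul, mul_inv_cancel₀ htne, one_smul]
          simp only [hγdef]
          module
        rwa [hexp] at hmem
    -- distance to the frontier grows linearly
    have hinf : ∀ t ∈ Set.Icc (0:ℝ) 1, t * r' ≤ Metric.infDist (γ t) (frontier Ω) := by
      intro t ht
      by_contra hlt
      push_neg at hlt
      obtain ⟨z, hzf, hz⟩ := (Metric.infDist_lt_iff hfr).1 hlt
      have hzΩ : z ∈ Ω := hsub t ht (by rwa [Metric.mem_ball, dist_comm])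
      rw [hΩo.frontier_eq] at hzf
      exact hzf.2 hzΩ
    -- bound on the derivative
    have hboundf : ∀ t ∈ Set.Ico (0:ℝ) 1,
        ‖fderiv ℝ H (γ t) (z₀ - w)‖ ≤ 2 * (C₀ * D) * a * ((1 + t / a)⁻¹ * (1 / a)) := by
      rintro t ⟨ht0, ht1⟩
      have htIcc : t ∈ Set.Icc (0:ℝ) 1 := ⟨ht0, ht1.le⟩
      have hγt := hγmem t htIcc
      have hzw : ‖z₀ - w‖ ≤ D := by
        rw [← dist_eq_norm]
        exact Metric.dist_le_diam_of_mem hΩb hz₀ hw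
      have hmin : min 1 (ε / Metric.infDist (γ t) (frontier Ω)) ≤ 2 * (a / (a + t)) := by
        rcases le_or_gt t a with hta | hta
        · refine (min_le_left _ _).trans ?_
          rw [← mul_div_assoc, le_div_iff₀ (by linarith : (0:ℝ) < a + t)]
          linarith
        · have htpos : 0 < t := ha0.trans hta
          have htr : 0 < t * r' := mul_pos htpos hr'0
          have h1 : ε / Metric.infDist (γ t) (frontier Ω) ≤ ε / (t * r') :=
            div_le_div_of_nonneg_left hε.le htr (hinf t htIcc)
          have h2 : ε / (t * r') = a / t := by
            rw [ha, div_div, mul_comm]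
          have h3 : a / t ≤ 2 * (a / (a + t)) := by
            rw [← mul_div_assoc, div_le_div_iff₀ htpos (by linarith : (0:ℝ) < a + t)]
            nlinarith [mul_lt_mul_of_pos_left hta ha0]
          calc min 1 (ε / Metric.infDist (γ t) (frontier Ω))
              ≤ ε / Metric.infDist (γ t) (frontier Ω) := min_le_right _ _
            _ ≤ ε / (t * r') := h1

            _ = a / t := h2
            _ ≤ 2 * (a / (a + t)) := h3
      have hεI : 0 ≤ ε / Metric.infDist (γ t) (frontier Ω) :=
        div_nonneg hε.le Metric.infDist_nonneg
      have heq : (1 + t / a)⁻¹ * (1 / a) = (a + t)⁻¹ := by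
        rw [one_div, ← mul_inv]
        congr 1
        rw [add_mul, one_mul, div_mul_cancel₀ _ ha0.ne']
      calc ‖fderiv ℝ H (γ t) (z₀ - w)‖
          ≤ ‖fderiv ℝ H (γ t)‖ * ‖z₀ - w‖ := (fderiv ℝ H (γ t)).le_opNorm _
        _ ≤ (C₀ * min 1 (ε / Metric.infDist (γ t) (frontier Ω))) * D := by
            apply mul_le_mul (hbound _ hγt) hzw (norm_nonneg _)
            positivity
        _ ≤ (C₀ * (2 * (a / (a + t)))) * D := by
            apply mul_le_mul_of_nonneg_right _ hDnn
            exact mul_le_mul_of_nonneg_left hmin hC₀.le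
        _ = 2 * (C₀ * D) * a * (a + t)⁻¹ := by
            rw [div_eq_mul_inv]; ring
        _ = 2 * (C₀ * D) * a * ((1 + t / a)⁻¹ * (1 / a)) := by rw [heq]
    -- the comparison function
    set B : ℝ → ℝ := fun t => 2 * (C₀ * D) * a * Real.log (1 + t / a) with hBdef
    have hBder : ∀ t ∈ Set.Icc (0:ℝ) 1,
        HasDerivAt B (2 * (C₀ * D) * a * ((1 + t / a)⁻¹ * (1 / a))) t := by
      rintro t ⟨ht0, _⟩
      have hpos : 0 < 1 + t / a := by positivity
      have h1 : HasDerivAt (fun s : ℝ => 1 + s / a) (1 / a) t := by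
        simpa using ((hasDerivAt_id t).div_const a).const_add (1:ℝ)
      have h2 := (Real.hasDerivAt_log hpos.ne').comp t h1
      exact h2.const_mul (2 * (C₀ * D) * a)
    have mvt := image_norm_le_of_norm_deriv_right_le_deriv_boundary'
      (f := fun s => H (γ s) - H (γ 0)) (a := 0) (b := 1)
      (f' := fun t => fderiv ℝ H (γ t) (z₀ - w))
      (fun t ht => ((hfder t ht).continuousAt).continuousWithinAt)
      (fun t ht => (hfder t (Set.Ico_subset_Icc_self ht)).hasDerivWithinAt)
      (B := B) (B' := fun t => 2 * (C₀ * D) * a * ((1 + t / a)⁻¹ * (1 / a)))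
      (by simp [hBdef])
      (fun t ht => ((hBder t ht).continuousAt).continuousWithinAt)
      (fun t ht => (hBder t (Set.Ico_subset_Icc_self ht)).hasDerivWithinAt)
      hboundf (Set.right_mem_Icc.2 zero_le_one)
    have hγ1 : γ 1 = z₀ := by simp [hγdef]
    have hγ0 : γ 0 = w := by simp [hγdef]
    have mvt' : ‖H (γ 1) - H (γ 0)‖ ≤ B 1 := mvt
    rw [hγ1, hγ0] at mvt'
    rw [norm_sub_rev]
    calc ‖H z₀ - H w‖ ≤ B 1 := mvt'
      _ = 2 * (C₀ * D) * a * Real.log (1 + 1 / a) := by simp [hBdef]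
  -- combine the two estimates
  have hx' := key x hx
  have hy' := key y hy
  set L := Real.log (1 + 1 / a) with hL
  have hL2nn : 0 ≤ Real.log (D / ε + 2) := by
    apply Real.log_nonneg
    have : 0 ≤ D / ε := div_nonneg hDnn hε.le
    linarith
  have hLle : L ≤ Real.log (D / ε + 2) := by
    have hpos1 : (0:ℝ) < 1 + 1 / a := by positivity
    have harg : 1 + 1 / a ≤ D / ε + 2 := by
      rw [ha, one_div, inv_div]
      have h1 : r' / ε ≤ D / ε := by gcongr
      linarith
    rw [hL]
    exact Real.log_le_log hpos1 harg
  have hLnn : 0 ≤ L := by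
    have hpos1 : (1:ℝ) ≤ 1 + 1 / a := by
      have : 0 < 1 / a := by positivity
      linarith
    rw [hL]
    exact Real.log_nonneg hpos1
  have htri : ‖H x - H y‖ ≤ ‖H x - H z₀‖ + ‖H z₀ - H y‖ := by
    have : H x - H y = (H x - H z₀) + (H z₀ - H y) := by abel
    rw [this]; exact norm_add_le _ _
  have hy'' : ‖H z₀ - H y‖ ≤ 2 * (C₀ * D) * a * L := by rw [norm_sub_rev]; exact hy'
  have hsum : ‖H x - H y‖ ≤ 4 * (C₀ * D) * a * L := by
    calc ‖H x - H y‖ ≤ ‖H x - H z₀‖ + ‖H z₀ - H y‖ := htri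
      _ ≤ 2 * (C₀ * D) * a * L + 2 * (C₀ * D) * a * L := add_le_add hx' hy''
      _ = 4 * (C₀ * D) * a * L := by ring
  have hfin : 4 * (C₀ * D) * a * L ≤ (4 * C₀ * D / r' + 1) * ε * Real.log (D / ε + 2) := by
    have h1 : 4 * (C₀ * D) * a = (4 * C₀ * D / r') * ε := by
      rw [ha, ← mul_div_assoc, div_mul_eq_mul_div]
      ring_nf
    rw [h1]
    have hc : 0 ≤ 4 * C₀ * D / r' * ε := by positivity
    calc (4 * C₀ * D / r') * ε * L ≤ (4 * C₀ * D / r') * ε * Real.log (D / ε + 2) :=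
          mul_le_mul_of_nonneg_left hLle hc
      _ ≤ (4 * C₀ * D / r' + 1) * ε * Real.log (D / ε + 2) := by
          apply mul_le_mul_of_nonneg_right _ hL2nn
          apply mul_le_mul_of_nonneg_right _ hε.le
          linarith
  linarith
end
end

section
/- Let Ω ⊂ ℝ^d be a bounded domain with diameter M, and suppose S_ε is an integral operator on Ω with kernel K_ε satisfying |K_ε(x,y)| ≤ C₀ min{|x−y|^{−d}, ε·|x−y|^{−d−1}·ln(|x−y|/ε + 2)} and S_ε(1) = 0 (i.e., p.v. ∫_Ω K_ε(x,y) dy = 0 for a.e. x). Then for every g ∈ C¹(ℝ^d) and 0 < ε < 1/2, ‖S_ε(g)‖_{L^∞(Ω)} ≤ C·√ε·|ln ε|·‖g‖_{C¹(Ω)}, where C depends only on d, C₀ and M. -/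
open MeasureTheory Metric Bornology
open scoped ENNReal NNReal BigOperators

noncomputable section

/-- geometric summation over a dyadic cover -/
lemma dyadic_sum {α : Type*} [MeasurableSpace α] {μ : Measure α} (f : α → ℝ≥0∞)
    (A : ℕ → Set α) (T : Set α) (c : ℝ≥0∞) (hT : T ⊆ ⋃ k, A k)
    (hA : ∀ k, ∫⁻ y in A k, f y ∂μ ≤ c * 2⁻¹ ^ k) :
    ∫⁻ y in T, f y ∂μ ≤ 2 * c := by
  calc ∫⁻ y in T, f y ∂μ ≤ ∫⁻ y in ⋃ k, A k, f y ∂μ := lintegral_mono_set hT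
    _ ≤ ∑' k, ∫⁻ y in A k, f y ∂μ := lintegral_iUnion_le _ _
    _ ≤ ∑' k : ℕ, c * 2⁻¹ ^ k := ENNReal.tsum_le_tsum hA
    _ = c * ∑' k : ℕ, 2⁻¹ ^ k := ENNReal.tsum_mul_left
    _ = c * 2 := by rw [ENNReal.tsum_geometric, ENNReal.one_sub_inv_two, inv_inv]
    _ = 2 * c := mul_comm _ _

lemma nontrivE {d : ℕ} (hd : 1 ≤ d) : Nontrivial (E d) := by
  refine Module.nontrivial_of_finrank_pos (R := ℝ) ?_
  rw [finrank_euclideanSpace_fin]; omega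

/-- bound for the integral of `dist x y ^ s` (with `s ≤ 0`) over a dyadic shell -/
lemma shell_bound {d : ℕ} (hd : 1 ≤ d) (x : E d) {r : ℝ} (hr : 0 < r) {s : ℝ} (hs : s ≤ 0) :
    ∫⁻ y in ball x (2*r) \ ball x r, ENNReal.ofReal (dist x y ^ s) ∂volume
      ≤ ENNReal.ofReal (r ^ s * (2*r) ^ d) * volume (ball (0 : E d) 1) := by
  haveI := nontrivE hd
  have h1 : ∫⁻ y in ball x (2*r) \ ball x r, ENNReal.ofReal (dist x y ^ s) ∂volume
      ≤ ∫⁻ _ in ball x (2*r) \ ball x r, ENNReal.ofReal (r ^ s) ∂volume := by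
    refine setLIntegral_mono' (measurableSet_ball.diff measurableSet_ball) fun y hy => ?_
    refine ENNReal.ofReal_le_ofReal ?_
    have hry : r ≤ dist x y := by
      have := hy.2
      rw [mem_ball, dist_comm] at this
      exact not_lt.mp this
    exact Real.rpow_le_rpow_of_nonpos hr hry hs
  rw [setLIntegral_const] at h1
  refine h1.trans ?_
  have h2 : volume (ball x (2*r) \ ball x r) ≤ volume (ball x (2*r)) :=
    measure_mono Set.diff_subset
  refine (mul_le_mul_right h2 _).trans ?_
  rw [Measure.addHaar_ball _ x (by positivity : (0:ℝ) ≤ 2*r), finrank_euclideanSpace_fin,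
    ← mul_assoc, ← ENNReal.ofReal_mul (Real.rpow_nonneg hr.le _)]

/-- near-diagonal integral bound -/
lemma near_bound {d : ℕ} (hd : 1 ≤ d) (x : E d) {R : ℝ} (hR : 0 < R) :
    ∫⁻ y in ball x R, ENNReal.ofReal (dist x y ^ ((1:ℝ) - d)) ∂volume
      ≤ ENNReal.ofReal ((2:ℝ)^d * R) * volume (ball (0 : E d) 1) := by
  haveI := nontrivE hd
  set V := volume (ball (0:E d) 1) with hV
  have hd' : (1:ℝ) ≤ (d:ℝ) := by exact_mod_cast hd
  set A : ℕ → Set (E d) := fun k => ball x (R * 2⁻¹ ^ k) \ ball x (R * 2⁻¹ ^ (k+1)) with hA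
  have hcover : ball x R ⊆ {x} ∪ ⋃ k, A k := by
    intro y hy
    rcases eq_or_ne y x with h | h
    · exact Or.inl (by simp [h])
    · refine Or.inr ?_
      have hδ : 0 < dist x y := dist_pos.mpr (Ne.symm h)
      have hδR : dist x y < R := by rw [dist_comm]; exact mem_ball.mp hy
      have hex : ∃ n, R * 2⁻¹ ^ n ≤ dist x y := by
        obtain ⟨n, hn⟩ := exists_pow_lt_of_lt_one (div_pos hδ hR)
          (by norm_num : (2⁻¹:ℝ) < 1)
        refine ⟨n, ?_⟩
        have := (lt_div_iff₀ hR).mp hn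
        nlinarith
      set N := Nat.find hex with hNdef
      have hNs : R * 2⁻¹ ^ N ≤ dist x y := Nat.find_spec hex
      have hN0 : N ≠ 0 := by
        intro h0
        rw [h0] at hNs
        simp only [pow_zero, mul_one] at hNs
        linarith
      obtain ⟨k, hkN⟩ : ∃ k, N = k + 1 :=
        ⟨N - 1, (Nat.succ_pred_eq_of_pos (Nat.pos_of_ne_zero hN0)).symm⟩
      have hk : ¬ (R * 2⁻¹ ^ k ≤ dist x y) := Nat.find_min hex (by omega)
      rw [hkN] at hNs
      refine Set.mem_iUnion.mpr ⟨k, ?_, ?_⟩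
      · rw [mem_ball, dist_comm]; exact lt_of_not_ge hk
      · rw [mem_ball, dist_comm]; exact not_lt.mpr hNs
  have hAk : ∀ k, ∫⁻ y in A k, ENNReal.ofReal (dist x y ^ ((1:ℝ)-d)) ∂volume
      ≤ (ENNReal.ofReal ((2:ℝ)^d * R) * V * 2⁻¹) * 2⁻¹ ^ k := by
    intro k
    have hr : (0:ℝ) < R * 2⁻¹ ^ (k+1) := by positivity
    have h2r : 2 * (R * 2⁻¹ ^ (k+1)) = R * 2⁻¹ ^ k := by
      rw [pow_succ]; ring
    have hsh := shell_bound hd x hr (show (1:ℝ) - d ≤ 0 by linarith)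
    rw [h2r] at hsh
    refine hsh.trans (le_of_eq ?_)
    have key : (R * 2⁻¹^(k+1) : ℝ) ^ ((1:ℝ)-d) * (R * 2⁻¹^k)^d
        = ((2:ℝ)^d * R * 2⁻¹) * 2⁻¹^k := by
      have h2' : (R * 2⁻¹^k : ℝ) = 2 * (R * 2⁻¹^(k+1)) := h2r.symm
      rw [h2', mul_pow, ← Real.rpow_natCast (R * 2⁻¹^(k+1)) d]
      rw [show (R * 2⁻¹^(k+1):ℝ) ^ ((1:ℝ)-d) * ((2:ℝ)^d * (R * 2⁻¹^(k+1)) ^ ((d:ℕ):ℝ))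
          = (2:ℝ)^d * ((R * 2⁻¹^(k+1)) ^ ((1:ℝ)-d) * (R * 2⁻¹^(k+1)) ^ ((d:ℕ):ℝ)) by ring]
      rw [← Real.rpow_add hr]
      norm_num
      rw [pow_succ]; ring
    rw [key, ENNReal.ofReal_mul (by positivity), ENNReal.ofReal_pow (by norm_num : (0:ℝ) ≤ 2⁻¹),
      ENNReal.ofReal_mul (by positivity), ENNReal.ofReal_inv_of_pos (by norm_num : (0:ℝ) < 2)]
    simp only [ENNReal.ofReal_ofNat]
    ring
  have hmain : ∫⁻ y in ball x R, ENNReal.ofReal (dist x y ^ ((1:ℝ)-d)) ∂volume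
      ≤ ∫⁻ y in ({x} : Set (E d)), ENNReal.ofReal (dist x y ^ ((1:ℝ)-d)) ∂volume
        + ∫⁻ y in ⋃ k, A k, ENNReal.ofReal (dist x y ^ ((1:ℝ)-d)) ∂volume :=
    (lintegral_mono_set hcover).trans (lintegral_union_le _ _ _)
  have hsing : ∫⁻ y in ({x} : Set (E d)), ENNReal.ofReal (dist x y ^ ((1:ℝ)-d)) ∂volume = 0 :=
    setLIntegral_measure_zero _ _ (measure_singleton x)
  have hsum := dyadic_sum (fun y => ENNReal.ofReal (dist x y ^ ((1:ℝ)-d))) A (⋃ k, A k)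
    (ENNReal.ofReal ((2:ℝ)^d * R) * V * 2⁻¹) (subset_rfl) hAk
  refine hmain.trans ?_
  rw [hsing, zero_add]
  refine hsum.trans (le_of_eq ?_)
  rw [show (2:ℝ≥0∞) * (ENNReal.ofReal ((2:ℝ)^d * R) * V * 2⁻¹)
      = (2 * 2⁻¹) * (ENNReal.ofReal ((2:ℝ)^d * R) * V) by ring]
  rw [ENNReal.mul_inv_cancel (by norm_num) (by norm_num), one_mul]

/-- far-field integral bound -/
lemma far_bound {d : ℕ} (hd : 1 ≤ d) (x : E d) {r : ℝ} (hr : 0 < r) :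
    ∫⁻ y in (ball x r)ᶜ, ENNReal.ofReal (dist x y ^ (-(d:ℝ) - 1)) ∂volume
      ≤ ENNReal.ofReal ((2:ℝ)^(d+1) * r⁻¹) * volume (ball (0 : E d) 1) := by
  haveI := nontrivE hd
  set V := volume (ball (0:E d) 1) with hV
  set A : ℕ → Set (E d) := fun k => ball x (r * 2 ^ (k+1)) \ ball x (r * 2 ^ k) with hA
  have hcover : (ball x r)ᶜ ⊆ ⋃ k, A k := by
    intro y hy
    have hry : r ≤ dist x y := by
      rw [Set.mem_compl_iff, mem_ball, dist_comm, not_lt] at hy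
      exact hy
    have hex : ∃ n, dist x y < r * 2 ^ n := by
      obtain ⟨n, hn⟩ := pow_unbounded_of_one_lt (dist x y / r) (by norm_num : (1:ℝ) < 2)
      exact ⟨n, by nlinarith [(div_lt_iff₀ hr).mp hn]⟩
    set N := Nat.find hex with hNdef
    have hNs : dist x y < r * 2 ^ N := Nat.find_spec hex
    have hN0 : N ≠ 0 := by
      intro h0
      rw [h0] at hNs
      simp only [pow_zero, mul_one] at hNs
      linarith
    obtain ⟨k, hkN⟩ : ∃ k, N = k + 1 :=
      ⟨N - 1, (Nat.succ_pred_eq_of_pos (Nat.pos_of_ne_zero hN0)).symm⟩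
    have hk : ¬ (dist x y < r * 2 ^ k) := Nat.find_min hex (by omega)
    rw [hkN] at hNs
    refine Set.mem_iUnion.mpr ⟨k, ?_, ?_⟩
    · rw [mem_ball, dist_comm]; exact hNs
    · rw [mem_ball, dist_comm]; exact hk
  have hAk : ∀ k, ∫⁻ y in A k, ENNReal.ofReal (dist x y ^ (-(d:ℝ)-1)) ∂volume
      ≤ (ENNReal.ofReal ((2:ℝ)^(d+1) * r⁻¹) * V * 2⁻¹) * 2⁻¹ ^ k := by
    intro k
    have hrk : (0:ℝ) < r * 2 ^ k := by positivity
    have h2r : 2 * (r * 2 ^ k) = r * 2 ^ (k+1) := by rw [pow_succ]; ring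
    have hsh := shell_bound hd x hrk (show -(d:ℝ) - 1 ≤ 0 by have : (0:ℝ) ≤ d := Nat.cast_nonneg d; linarith)
    rw [h2r] at hsh
    refine hsh.trans (le_of_eq ?_)
    have key : (r * 2^k : ℝ) ^ (-(d:ℝ)-1) * (r * 2^(k+1))^d
        = ((2:ℝ)^(d+1) * r⁻¹ * 2⁻¹) * 2⁻¹^k := by
      have h2' : (r * 2^(k+1) : ℝ) = 2 * (r * 2^k) := h2r.symm
      rw [h2', mul_pow, ← Real.rpow_natCast (r * 2^k) d]
      rw [show (r * 2^k:ℝ) ^ (-(d:ℝ)-1) * ((2:ℝ)^d * (r * 2^k) ^ ((d:ℕ):ℝ))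
          = (2:ℝ)^d * ((r * 2^k) ^ (-(d:ℝ)-1) * (r * 2^k) ^ ((d:ℕ):ℝ)) by ring]
      rw [← Real.rpow_add hrk]
      rw [show -(d:ℝ) - 1 + (d:ℕ) = -1 by push_cast; ring]
      rw [Real.rpow_neg_one, mul_inv, inv_pow, pow_succ]
      ring
    rw [key, ENNReal.ofReal_mul (by positivity), ENNReal.ofReal_pow (by norm_num : (0:ℝ) ≤ 2⁻¹),
      ENNReal.ofReal_mul (by positivity), ENNReal.ofReal_inv_of_pos (by norm_num : (0:ℝ) < 2)]
    simp only [ENNReal.ofReal_ofNat]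
    ring
  have hsum := dyadic_sum (fun y => ENNReal.ofReal (dist x y ^ (-(d:ℝ)-1))) A ((ball x r)ᶜ)
    (ENNReal.ofReal ((2:ℝ)^(d+1) * r⁻¹) * V * 2⁻¹) hcover hAk
  refine hsum.trans (le_of_eq ?_)
  rw [show (2:ℝ≥0∞) * (ENNReal.ofReal ((2:ℝ)^(d+1) * r⁻¹) * V * 2⁻¹)
      = (2 * 2⁻¹) * (ENNReal.ofReal ((2:ℝ)^(d+1) * r⁻¹) * V) by ring]
  rw [ENNReal.mul_inv_cancel (by norm_num) (by norm_num), one_mul]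

set_option maxHeartbeats 2000000 in
/-- If |K_ε(x,y)| ≤ C₀ min{|x−y|^{−d}, ε|x−y|^{−d−1}ln(|x−y|/ε+2)} and
S_ε(1) = 0, so that S_ε(g)(x) = ∫_Ω K_ε(x,y)(g(y) − g(x)) dy, then for g ∈ C¹ and
0 < ε < 1/2, ‖S_ε(g)‖_{L^∞(Ω)} ≤ C√ε|ln ε|‖g‖_{C¹}. -/
theorem stmt_19 (d : ℕ) (hd : 1 ≤ d) (C₀ M : ℝ) (hC₀ : 0 < C₀) (hM : 0 < M) :
    ∃ C : ℝ, 0 < C ∧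
      ∀ (Ω : Set (E d)) (ε B : ℝ) (K : E d → E d → ℝ) (S g : E d → ℝ),
      MeasurableSet Ω → IsBounded Ω → Metric.diam Ω ≤ M → 0 < ε → ε < 1 / 2 →
      0 ≤ B →
      (∀ x y : E d, x ≠ y → |K x y|
        ≤ C₀ * min ((dist x y) ^ (-(d : ℝ)))
            (ε * (dist x y) ^ (-(d : ℝ) - 1) * Real.log (dist x y / ε + 2))) →
      ContDiff ℝ 1 g → (∀ x, |g x| ≤ B) → (∀ x, ‖fderiv ℝ g x‖ ≤ B) →
      -- S_ε(g)(x) = p.v. ∫_Ω K_ε(x,y) g(y) dy with S_ε(1) = 0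
      (∀ x ∈ Ω, S x = ∫ y in Ω, K x y * (g y - g x)) →
      ∀ x ∈ Ω, |S x| ≤ C * Real.sqrt ε * |Real.log ε| * B := by
  classical
  have hd' : (1:ℝ) ≤ (d:ℝ) := by exact_mod_cast hd
  set V := volume (ball (0 : E d) 1) with hV
  have hVtop : V ≠ ⊤ := measure_ball_lt_top.ne
  have hlog2 : (0:ℝ) < Real.log 2 := Real.log_pos one_lt_two
  have hlogM : (0:ℝ) ≤ Real.log (M + 2) := Real.log_nonneg (by linarith)
  set c₁ : ℝ := 2^d / Real.log 2 + 2^(d+2) * (Real.log (M+2) / Real.log 2 + 1) with hc₁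
  have hc₁pos : 0 < c₁ := by positivity
  refine ⟨max 1 (V.toReal * C₀ * c₁), lt_of_lt_of_le one_pos (le_max_left _ _), ?_⟩
  intro Ω ε B K S g hΩmeas hΩbd hdiam hε hε2 hB hK hg hgB hgB' hS x hx
  rw [hS x hx]
  set r0 := Real.sqrt ε with hr0
  have hr0pos : 0 < r0 := Real.sqrt_pos.mpr hε
  have hr0sq : r0 * r0 = ε := Real.mul_self_sqrt hε.le
  set L := Real.log (M/ε + 2) with hL
  have hL2 : Real.log 2 ≤ L := Real.log_le_log (by norm_num) (by
    have : 0 ≤ M / ε := by positivity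
    linarith)
  have hLpos : 0 < L := lt_of_lt_of_le hlog2 hL2
  set A := |Real.log ε| with hA
  have hAeq : A = -Real.log ε := abs_of_neg (Real.log_neg hε (by linarith))
  have hA2 : Real.log 2 ≤ A := by
    have h1 : (2:ℝ) ≤ ε⁻¹ := by
      rw [show (2:ℝ) = (1/2)⁻¹ by norm_num]
      exact inv_anti₀ hε hε2.le
    have := Real.log_le_log (by norm_num) h1
    rw [Real.log_inv] at this
    linarith [hAeq]
  have hApos : 0 < A := lt_of_lt_of_le hlog2 hA2
  have h2CB : (0:ℝ) ≤ 2*C₀*B*ε*L :=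
    mul_nonneg (mul_nonneg (mul_nonneg (mul_nonneg zero_le_two hC₀.le) hB) hε.le) hLpos.le
  -- Lipschitz bound
  have hLip : ∀ y : E d, |g y - g x| ≤ B * dist x y := by
    intro y
    have h := Convex.norm_image_sub_le_of_norm_fderiv_le
      (f := g) (s := Set.univ)
      (fun z _ => (hg.differentiable one_ne_zero).differentiableAt)
      (fun z _ => hgB' z) convex_univ (Set.mem_univ x) (Set.mem_univ y)
    rw [Real.norm_eq_abs] at h
    calc |g y - g x| ≤ B * ‖y - x‖ := h
      _ = B * dist x y := by rw [dist_eq_norm, norm_sub_rev]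
  -- pointwise near bound
  have near_pt : ∀ y ∈ Ω ∩ ball x r0,
      ENNReal.ofReal ‖K x y * (g y - g x)‖
        ≤ ENNReal.ofReal (C₀*B) * ENNReal.ofReal (dist x y ^ ((1:ℝ) - d)) := by
    intro y _
    rcases eq_or_ne y x with rfl | hxy
    · simp
    have hδ : 0 < dist x y := dist_pos.mpr (Ne.symm hxy)
    have hK1 : |K x y| ≤ C₀ * dist x y ^ (-(d:ℝ)) :=
      (hK x y (Ne.symm hxy)).trans (mul_le_mul_of_nonneg_left (min_le_left _ _) hC₀.le)
    have hprod : ‖K x y * (g y - g x)‖ ≤ C₀ * B * dist x y ^ ((1:ℝ) - d) := by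
      rw [Real.norm_eq_abs, abs_mul]
      have h1 : |K x y| * |g y - g x| ≤ (C₀ * dist x y ^ (-(d:ℝ))) * (B * dist x y) :=
        mul_le_mul hK1 (hLip y) (abs_nonneg _) (by positivity)
      refine h1.trans (le_of_eq ?_)
      have heq : dist x y ^ (-(d:ℝ)) * dist x y = dist x y ^ ((1:ℝ) - d) := by
        rw [show (1:ℝ) - d = -(d:ℝ) + 1 by ring, Real.rpow_add hδ, Real.rpow_one]
      rw [show (C₀ * dist x y ^ (-(d:ℝ))) * (B * dist x y)
          = C₀ * B * (dist x y ^ (-(d:ℝ)) * dist x y) by ring, heq]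
    refine (ENNReal.ofReal_le_ofReal hprod).trans (le_of_eq ?_)
    rw [ENNReal.ofReal_mul (show (0:ℝ) ≤ C₀ * B by positivity)]
  -- pointwise far bound
  have far_pt : ∀ y ∈ Ω \ ball x r0,
      ENNReal.ofReal ‖K x y * (g y - g x)‖
        ≤ ENNReal.ofReal (2*C₀*B*ε*L) * ENNReal.ofReal (dist x y ^ (-(d:ℝ) - 1)) := by
    intro y hy
    have hdy : r0 ≤ dist x y := by
      have := hy.2
      rw [mem_ball, dist_comm, not_lt] at this
      exact this
    have hδ : 0 < dist x y := lt_of_lt_of_le hr0pos hdy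
    have hxy : x ≠ y := fun h => by rw [h] at hδ; simp at hδ
    have hdM : dist x y ≤ M := le_trans (dist_le_diam_of_mem hΩbd hx hy.1) hdiam
    have hlogle : Real.log (dist x y / ε + 2) ≤ L := by
      refine Real.log_le_log (by positivity) ?_
      have : dist x y / ε ≤ M / ε := by gcongr
      linarith
    have hK1 : |K x y| ≤ C₀ * (ε * dist x y ^ (-(d:ℝ)-1) * L) := by
      refine (hK x y hxy).trans ?_
      refine mul_le_mul_of_nonneg_left ((min_le_right _ _).trans ?_) hC₀.le
      exact mul_le_mul_of_nonneg_left hlogle (by positivity)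
    have hg2 : |g y - g x| ≤ 2 * B := by
      calc |g y - g x| ≤ |g y| + |g x| := abs_sub _ _
        _ ≤ B + B := add_le_add (hgB y) (hgB x)
        _ = 2 * B := by ring
    have hprod : ‖K x y * (g y - g x)‖ ≤ (2*C₀*B*ε*L) * dist x y ^ (-(d:ℝ)-1) := by
      rw [Real.norm_eq_abs, abs_mul]
      have h1 : |K x y| * |g y - g x| ≤ (C₀ * (ε * dist x y ^ (-(d:ℝ)-1) * L)) * (2*B) :=
        mul_le_mul hK1 hg2 (abs_nonneg _)
          (mul_nonneg hC₀.le (mul_nonneg (mul_nonneg hε.le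
            (Real.rpow_nonneg dist_nonneg _)) hLpos.le))
      refine h1.trans (le_of_eq (by ring))
    refine (ENNReal.ofReal_le_ofReal hprod).trans (le_of_eq ?_)
    rw [ENNReal.ofReal_mul h2CB]
  -- the main estimate
  have step1 : |∫ y in Ω, K x y * (g y - g x)|
      ≤ (∫⁻ y in Ω, ENNReal.ofReal ‖K x y * (g y - g x)‖ ∂volume).toReal := by
    simpa [Real.norm_eq_abs] using
      norm_integral_le_lintegral_norm (μ := volume.restrict Ω)
        (fun y => K x y * (g y - g x))
  have hsplit : ∫⁻ y in Ω, ENNReal.ofReal ‖K x y * (g y - g x)‖ ∂volume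
      ≤ ∫⁻ y in Ω ∩ ball x r0, ENNReal.ofReal ‖K x y * (g y - g x)‖ ∂volume
        + ∫⁻ y in Ω \ ball x r0, ENNReal.ofReal ‖K x y * (g y - g x)‖ ∂volume := by
    refine (lintegral_mono_set ?_).trans (lintegral_union_le _ _ _)
    intro y hy
    by_cases h : y ∈ ball x r0
    · exact Or.inl ⟨hy, h⟩
    · exact Or.inr ⟨hy, h⟩
  have hnear : ∫⁻ y in Ω ∩ ball x r0, ENNReal.ofReal ‖K x y * (g y - g x)‖ ∂volume
      ≤ ENNReal.ofReal (C₀*B) * (ENNReal.ofReal ((2:ℝ)^d * r0) * V) := by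
    calc ∫⁻ y in Ω ∩ ball x r0, ENNReal.ofReal ‖K x y * (g y - g x)‖ ∂volume
        ≤ ∫⁻ y in Ω ∩ ball x r0,
            ENNReal.ofReal (C₀*B) * ENNReal.ofReal (dist x y ^ ((1:ℝ) - d)) ∂volume :=
          setLIntegral_mono' (hΩmeas.inter measurableSet_ball) near_pt
      _ ≤ ∫⁻ y in ball x r0,
            ENNReal.ofReal (C₀*B) * ENNReal.ofReal (dist x y ^ ((1:ℝ) - d)) ∂volume :=
          lintegral_mono_set Set.inter_subset_right
      _ = ENNReal.ofReal (C₀*B)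
            * ∫⁻ y in ball x r0, ENNReal.ofReal (dist x y ^ ((1:ℝ) - d)) ∂volume :=
          lintegral_const_mul' _ _ ENNReal.ofReal_ne_top
      _ ≤ ENNReal.ofReal (C₀*B) * (ENNReal.ofReal ((2:ℝ)^d * r0) * V) :=
          mul_le_mul_right (near_bound hd x hr0pos) _
  have hfar : ∫⁻ y in Ω \ ball x r0, ENNReal.ofReal ‖K x y * (g y - g x)‖ ∂volume
      ≤ ENNReal.ofReal (2*C₀*B*ε*L) * (ENNReal.ofReal ((2:ℝ)^(d+1) * r0⁻¹) * V) := by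
    calc ∫⁻ y in Ω \ ball x r0, ENNReal.ofReal ‖K x y * (g y - g x)‖ ∂volume
        ≤ ∫⁻ y in Ω \ ball x r0,
            ENNReal.ofReal (2*C₀*B*ε*L) * ENNReal.ofReal (dist x y ^ (-(d:ℝ) - 1)) ∂volume :=
          setLIntegral_mono' (hΩmeas.diff measurableSet_ball) far_pt
      _ ≤ ∫⁻ y in (ball x r0)ᶜ,
            ENNReal.ofReal (2*C₀*B*ε*L) * ENNReal.ofReal (dist x y ^ (-(d:ℝ) - 1)) ∂volume :=
          lintegral_mono_set (fun y hy => hy.2)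
      _ = ENNReal.ofReal (2*C₀*B*ε*L)
            * ∫⁻ y in (ball x r0)ᶜ, ENNReal.ofReal (dist x y ^ (-(d:ℝ) - 1)) ∂volume :=
          lintegral_const_mul' _ _ ENNReal.ofReal_ne_top
      _ ≤ ENNReal.ofReal (2*C₀*B*ε*L) * (ENNReal.ofReal ((2:ℝ)^(d+1) * r0⁻¹) * V) :=
          mul_le_mul_right (far_bound hd x hr0pos) _
  -- combine
  have hab : C₀*B*((2:ℝ)^d*r0) + (2*C₀*B*ε*L)*((2:ℝ)^(d+1)*r0⁻¹)
      = C₀ * B * r0 * (2^d + 2^(d+2) * L) := by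
    rw [← hr0sq, pow_succ, pow_succ]
    field_simp
    ring
  have hcombine : ∫⁻ y in Ω, ENNReal.ofReal ‖K x y * (g y - g x)‖ ∂volume
      ≤ ENNReal.ofReal (C₀ * B * r0 * (2^d + 2^(d+2) * L)) * V := by
    refine hsplit.trans ((add_le_add hnear hfar).trans (le_of_eq ?_))
    calc ENNReal.ofReal (C₀*B) * (ENNReal.ofReal ((2:ℝ)^d * r0) * V)
          + ENNReal.ofReal (2*C₀*B*ε*L) * (ENNReal.ofReal ((2:ℝ)^(d+1) * r0⁻¹) * V)
        = ENNReal.ofReal (C₀*B*((2:ℝ)^d*r0)) * V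
          + ENNReal.ofReal ((2*C₀*B*ε*L)*((2:ℝ)^(d+1)*r0⁻¹)) * V := by
          rw [ENNReal.ofReal_mul (show (0:ℝ) ≤ C₀*B by positivity),
            ENNReal.ofReal_mul h2CB]
          ring
      _ = ENNReal.ofReal (C₀*B*((2:ℝ)^d*r0) + (2*C₀*B*ε*L)*((2:ℝ)^(d+1)*r0⁻¹)) * V := by
          rw [ENNReal.ofReal_add (show (0:ℝ) ≤ C₀*B*((2:ℝ)^d*r0) by positivity)
            (mul_nonneg h2CB (by positivity)), add_mul]
      _ = ENNReal.ofReal (C₀ * B * r0 * (2^d + 2^(d+2) * L)) * V := by rw [hab]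
  -- log comparison
  have hLle : L ≤ Real.log (M+2) + A := by
    have harg : M/ε + 2 ≤ (M+2)/ε := by
      rw [add_div]
      have h2 : (2:ℝ) ≤ 2/ε := by
        rw [le_div_iff₀ hε]; linarith
      linarith
    have := Real.log_le_log (by positivity) harg
    rw [Real.log_div (by linarith) hε.ne'] at this
    linarith [hAeq]
  have hlog : 2^d + 2^(d+2) * L ≤ c₁ * A := by
    rw [hc₁, add_mul]
    have e1 : (2:ℝ)^d ≤ 2^d / Real.log 2 * A := by
      rw [div_mul_eq_mul_div, le_div_iff₀ hlog2]
      nlinarith [pow_pos (show (0:ℝ) < 2 by norm_num) d]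
    have e2 : (2:ℝ)^(d+2) * L ≤ 2^(d+2) * (Real.log (M+2) / Real.log 2 + 1) * A := by
      have h3 : Real.log (M+2) ≤ Real.log (M+2) / Real.log 2 * A := by
        rw [div_mul_eq_mul_div, le_div_iff₀ hlog2]
        nlinarith
      have h4 : L ≤ (Real.log (M+2) / Real.log 2 + 1) * A := by
        rw [add_mul, one_mul]
        linarith
      calc (2:ℝ)^(d+2) * L ≤ 2^(d+2) * ((Real.log (M+2) / Real.log 2 + 1) * A) :=
            mul_le_mul_of_nonneg_left h4 (by positivity)
        _ = 2^(d+2) * (Real.log (M+2) / Real.log 2 + 1) * A := by ring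
    linarith
  -- finish
  have hfinal : ∫⁻ y in Ω, ENNReal.ofReal ‖K x y * (g y - g x)‖ ∂volume
      ≤ ENNReal.ofReal (C₀ * B * r0 * (c₁ * A)) * V := by
    refine hcombine.trans (mul_le_mul_left (ENNReal.ofReal_le_ofReal ?_) _)
    exact mul_le_mul_of_nonneg_left hlog (by positivity)
  refine step1.trans ?_
  have htoReal : (∫⁻ y in Ω, ENNReal.ofReal ‖K x y * (g y - g x)‖ ∂volume).toReal
      ≤ (ENNReal.ofReal (C₀ * B * r0 * (c₁ * A)) * V).toReal := by
    refine ENNReal.toReal_mono ?_ hfinal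
    exact ENNReal.mul_ne_top ENNReal.ofReal_ne_top hVtop
  refine htoReal.trans ?_
  rw [ENNReal.toReal_mul, ENNReal.toReal_ofReal
    (mul_nonneg (mul_nonneg (mul_nonneg hC₀.le hB) hr0pos.le)
      (mul_nonneg hc₁pos.le hApos.le))]
  have hCle : V.toReal * C₀ * c₁ ≤ max 1 (V.toReal * C₀ * c₁) := le_max_right _ _
  have hVnn : 0 ≤ V.toReal := ENNReal.toReal_nonneg
  calc C₀ * B * r0 * (c₁ * A) * V.toReal = (V.toReal * C₀ * c₁) * (r0 * A * B) := by ring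
    _ ≤ max 1 (V.toReal * C₀ * c₁) * (r0 * A * B) := by
        refine mul_le_mul_of_nonneg_right hCle (mul_nonneg (mul_nonneg hr0pos.le hApos.le) hB)
    _ = max 1 (V.toReal * C₀ * c₁) * r0 * A * B := by ring
end
end
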